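/- Ad-invariance of the span of Pfaffian-type elements for SO₀(m,n) (Proposition 2-6(1)): Let m ≥ n ≥ 1, N := m+n, p ≥ 1 with 2p ≤ N. For every g in the identity component SO₀(m,n) of the real matrix group {g ∈ GL_N(ℝ) : gᵀ·I_{m,n}·g = I_{m,n}, det g = 1}, conjugation X ↦ g·X·g⁻¹ preserves 𝔤_ℂ and hence induces an algebra automorphism Ad(g) of U(𝔤_ℂ); then for every I ∈ T_{2p}(N) there exist complex numbers a^I_{I'}(g), indexed by I' ∈ T_{2p}(N), such that Ad(g)(W_I) = Σ_{I' ∈ T_{2p}(N)} a^I_{I'}(g)·W_{I'}. In particular Ad(g) maps the ℂ-linear span of {W_I : I ∈ T_{2p}(N)} into itself. -/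

import Mathlib

open scoped Classical Matrix

set_option maxHeartbeats 1000000
set_option synthInstance.maxHeartbeats 400000

attribute [local instance] LieRing.ofAssociativeRing

noncomputable section

namespace SOMN

/-- The matrix I_{m,n} = diag(1_m, −1_n) over ℂ. -/
def Jmn (m n : ℕ) : Matrix (Fin (m+n)) (Fin (m+n)) ℂ :=
  Matrix.diagonal fun i => if (i : ℕ) < m then 1 else -1

/-- 𝔤_ℂ = {X ∈ M_N(ℂ) : Xᵀ I_{m,n} + I_{m,n} X = 0}, the complexification of 𝔰𝔬(m,n). -/
abbrev gC (m n : ℕ) : LieSubalgebra ℂ (Matrix (Fin (m+n)) (Fin (m+n)) ℂ) :=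
  skewAdjointMatricesLieSubalgebra (Jmn m n)

abbrev U (m n : ℕ) := UniversalEnvelopingAlgebra ℂ (gC m n)

def ι {m n : ℕ} (x : gC m n) : U m n := UniversalEnvelopingAlgebra.ι ℂ x

lemma mem_gC {m n : ℕ} (A : Matrix (Fin (m+n)) (Fin (m+n)) ℂ)
    (h : Aᵀ * Jmn m n = -(Jmn m n * A)) : A ∈ gC m n := by
  rw [mem_skewAdjointMatricesLieSubalgebra, mem_skewAdjointMatricesSubmodule]
  show Aᵀ * Jmn m n = Jmn m n * (-A)
  simpa [Matrix.mul_neg] using h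

lemma std_mul_diag {k : ℕ} (d : Fin k → ℂ) (i j : Fin k) (c : ℂ) :
    Matrix.single i j c * Matrix.diagonal d = Matrix.single i j (c * d j) := by
  ext a b
  simp [Matrix.mul_diagonal, Matrix.single]
  aesop

lemma diag_mul_std {k : ℕ} (d : Fin k → ℂ) (i j : Fin k) (c : ℂ) :
    Matrix.diagonal d * Matrix.single i j c = Matrix.single i j (d i * c) := by
  ext a b
  simp [Matrix.diagonal_mul, Matrix.single]
  aesop

lemma transpose_std {k : ℕ} (i j : Fin k) (c : ℂ) :
    (Matrix.single i j c)ᵀ = Matrix.single j i c := by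
  ext a b
  simp [Matrix.transpose_apply, Matrix.single, and_comm]

/-- Membership criterion for a two-entry matrix `a E_{ji} + b E_{ij}`. -/
lemma pair_mem {m n : ℕ} (i j : Fin (m+n)) (a b : ℂ)
    (h : a * (if (j : ℕ) < m then (1:ℂ) else -1) + b * (if (i : ℕ) < m then (1:ℂ) else -1) = 0) :
    a • Matrix.single j i (1:ℂ) + b • Matrix.single i j 1 ∈ gC m n := by
  apply mem_gC
  rw [Matrix.transpose_add, Matrix.transpose_smul, Matrix.transpose_smul,
    transpose_std, transpose_std]
  unfold Jmn
  rw [Matrix.add_mul, Matrix.smul_mul, Matrix.smul_mul, std_mul_diag, std_mul_diag,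
    Matrix.mul_add, Matrix.mul_smul, Matrix.mul_smul, diag_mul_std, diag_mul_std]
  rw [Matrix.smul_single, Matrix.smul_single,
    Matrix.smul_single, Matrix.smul_single]
  have h1 : a * (if (j : ℕ) < m then (1:ℂ) else -1)
      = -(b * (if (i : ℕ) < m then (1:ℂ) else -1)) := by linear_combination h
  have hstdneg : ∀ (p q : Fin (m+n)) (c : ℂ),
      Matrix.single p q (-c) = -Matrix.single p q c := by
    intro p q c
    ext x y
    simp only [Matrix.single, Matrix.neg_apply, Matrix.of_apply]
    split_ifs <;> simp
  simp only [smul_eq_mul, mul_one, one_mul, h1, hstdneg, neg_neg]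
  abel

/-- X̄_{ij}. -/
def Xbar {m n : ℕ} (i j : Fin (m+n)) : gC m n :=
  if h : ((i : ℕ) < m ∧ (j : ℕ) < m) ∨ (m ≤ (i : ℕ) ∧ m ≤ (j : ℕ)) then
    ⟨Matrix.single j i 1 - Matrix.single i j 1, by
      have h2 := pair_mem (m := m) (n := n) i j 1 (-1) (by
        rcases h with ⟨h1, h2⟩ | ⟨h1, h2⟩
        · rw [if_pos h2, if_pos h1]; ring
        · rw [if_neg (by omega), if_neg (by omega)]; ring)
      simpa [sub_eq_add_neg] using h2⟩
  else if hi : (i : ℕ) < m then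
    ⟨(-Complex.I) • (Matrix.single j i 1 + Matrix.single i j 1), by
      have hj : ¬ ((j : ℕ) < m) := by omega
      have h2 := pair_mem (m := m) (n := n) i j (-Complex.I) (-Complex.I) (by
        rw [if_neg hj, if_pos hi]; ring)
      simpa [smul_add] using h2⟩
  else
    ⟨Complex.I • (Matrix.single j i 1 + Matrix.single i j 1), by
      have hj : (j : ℕ) < m := by omega
      have h2 := pair_mem (m := m) (n := n) i j Complex.I Complex.I (by
        rw [if_pos hj, if_neg hi]; ring)
      simpa [smul_add] using h2⟩

/-- Y_{l, N+1−l} (meaningful for `l ≤ n ≤ m`, junk value 0 otherwise). -/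
def Yel {m n : ℕ} (l : Fin (m+n)) : gC m n :=
  if h : (l : ℕ) < n ∧ n ≤ m then
    ⟨Matrix.single l.rev l 1 + Matrix.single l l.rev 1, by
      have hv : ¬ ((l.rev : ℕ) < m) := by rw [Fin.val_rev]; omega
      have hl : (l : ℕ) < m := by omega
      have h2 := pair_mem (m := m) (n := n) l l.rev 1 1 (by
        rw [if_neg hv, if_pos hl]; ring)
      simpa using h2⟩
  else 0

/-- The root vector N_l^q (meaningful for `1 ≤ q ≤ n ≤ m`, `q < l < N+1−q`;
junk value 0 otherwise). -/
def Nel {m n : ℕ} (q l : Fin (m+n)) : gC m n :=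
  if h : (q : ℕ) < n ∧ n ≤ m ∧ (q : ℕ) < (l : ℕ) ∧ (l : ℕ) < (q.rev : ℕ) then
    if hl : (l : ℕ) < m then
      -- N_l^q = Y_{l,N+1−q} + X_{l,q}
      ⟨(Matrix.single q.rev l 1 + Matrix.single l q.rev 1) +
        (Matrix.single q l 1 - Matrix.single l q 1), by
        have hrev : ¬ ((q.rev : ℕ) < m) := by rw [Fin.val_rev]; omega
        have hq : (q : ℕ) < m := by omega
        have e1 := pair_mem (m := m) (n := n) l q.rev 1 1 (by
          rw [if_neg hrev, if_pos hl]; ring)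
        have e2 := pair_mem (m := m) (n := n) l q 1 (-1) (by
          rw [if_pos hq, if_pos hl]; ring)
        simpa [sub_eq_add_neg] using add_mem e1 e2⟩
    else
      -- N_l^q = X_{l,N+1−q} + Y_{l,q}
      ⟨(Matrix.single q.rev l 1 - Matrix.single l q.rev 1) +
        (Matrix.single q l 1 + Matrix.single l q 1), by
        have hrev : ¬ ((q.rev : ℕ) < m) := by rw [Fin.val_rev]; omega
        have hq : (q : ℕ) < m := by omega
        have e1 := pair_mem (m := m) (n := n) l q.rev 1 (-1) (by
          rw [if_neg hrev, if_neg hl]; ring)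
        have e2 := pair_mem (m := m) (n := n) l q 1 1 (by
          rw [if_pos hq, if_neg hl]; ring)
        simpa [sub_eq_add_neg] using add_mem e1 e2⟩
  else 0

def pos0 {p : ℕ} (a : Fin p) : Fin (2*p) := ⟨2*a.1, by have := a.2; omega⟩
def pos1 {p : ℕ} (a : Fin p) : Fin (2*p) := ⟨2*a.1+1, by have := a.2; omega⟩

/-- The set P₊(I) of admissible permutations. -/
def Pplus {N p : ℕ} (f : Fin (2*p) → Fin N) (π : Equiv.Perm (Fin (2*p))) : Prop :=
  (StrictMono fun a : Fin p => f (π (pos0 a))) ∧ ∀ a : Fin p, f (π (pos0 a)) < f (π (pos1 a))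

/-- The Pfaffian-type element W_I attached to a finset of cardinality 2p (0 otherwise). -/
def Wb (m n p : ℕ) (s : Finset (Fin (m+n))) : U m n :=
  if h : s.card = 2*p then
    ∑ π : Equiv.Perm (Fin (2*p)),
      if Pplus (fun a => s.orderEmbOfFin h a) π then
        ((Equiv.Perm.sign π : ℤˣ) : ℤ) •
          (List.ofFn fun a : Fin p =>
            ι (Xbar (s.orderEmbOfFin h (π (pos0 a))) (s.orderEmbOfFin h (π (pos1 a))))).prod
      else 0
  else 0

/-- The central element W_p = Σ_{I ∈ T_{2p}(m+n)} W_I². -/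
def Wcb (m n p : ℕ) : U m n :=
  ∑ I ∈ Finset.univ.filter (fun I : Finset (Fin (m+n)) => I.card = 2*p), (Wb m n p I)^2

/-- W^n_{p'} : the truncated central element supported on indices in {n+1,…,m}. -/
def Wn (m n p' : ℕ) : U m n :=
  if 2*p' ≤ m - n then
    ∑ I ∈ Finset.univ.filter (fun I : Finset (Fin (m+n)) =>
        I.card = 2*p' ∧ ∀ j ∈ I, n ≤ (j : ℕ) ∧ (j : ℕ) < m),
      (Wb m n p' I)^2
  else 0

/-- 𝔫(0)_ℂ : the span of the root vectors N_l^q. -/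
def n0C (m n : ℕ) : Submodule ℂ (gC m n) :=
  Submodule.span ℂ (Set.range fun ql : Fin (m+n) × Fin (m+n) => Nel ql.1 ql.2)

/-- 𝔫(0)_ℂ·U(𝔤_ℂ) : finite sums of products ι(v)·u, v ∈ 𝔫(0)_ℂ. -/
def nUC (m n : ℕ) : Submodule ℂ (U m n) :=
  Submodule.span ℂ {x | ∃ v ∈ n0C m n, ∃ u : U m n, x = ι v * u}

end SOMN
namespace SOMN

lemma perm_apply_inv_self {α : Type*} (π : Equiv.Perm α) (a : α) : π (π⁻¹ a) = a :=
  (Equiv.eq_symm_apply π).mp rfl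

lemma perm_inv_apply_self {α : Type*} (π : Equiv.Perm α) (a : α) : π⁻¹ (π a) = a :=
  Equiv.Perm.inv_eq_iff_eq.mpr rfl

section Prods
variable {M : Type*} [Ring M] [Algebra ℂ M]

/-- ordered product of a tuple in a noncommutative algebra -/
def Lp {p : ℕ} (v : Fin p → M) : M := (List.ofFn v).prod

lemma Lp_succ {p : ℕ} (v : Fin (p+1) → M) : Lp v = v 0 * Lp (fun a => v a.succ) := by
  simp [Lp, List.ofFn_succ]

lemma Lp_sum {p : ℕ} {κ : Type*} [Fintype κ] (F : Fin p → κ → M) :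
    Lp (fun a => ∑ k, F a k) = ∑ φ : Fin p → κ, Lp (fun a => F a (φ a)) := by
  induction p with
  | zero =>
      rw [Fintype.sum_eq_single (fun a : Fin 0 => a.elim0)]
      · rfl
      · intro φ hφ; exact absurd (funext fun a => a.elim0) hφ
  | succ p ih =>
      rw [Lp_succ, ih (fun a k => F a.succ k)]
      rw [← Fintype.sum_equiv (Fin.consEquiv (fun _ : Fin (p+1) => κ))
        (fun x => Lp (fun a => F a ((Fin.consEquiv (fun _ : Fin (p+1) => κ)) x a)))
        (fun φ : Fin (p+1) → κ => Lp (fun a => F a (φ a))) (fun x => rfl)]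
      rw [Fintype.sum_prod_type, Finset.sum_mul_sum]
      refine Finset.sum_congr rfl fun k _ => Finset.sum_congr rfl fun φ _ => ?_
      rw [Lp_succ]
      simp [Fin.consEquiv]

lemma Lp_smul {p : ℕ} (c : Fin p → ℂ) (v : Fin p → M) :
    Lp (fun a => c a • v a) = (∏ a, c a) • Lp v := by
  induction p with
  | zero => simp [Lp]
  | succ p ih =>
      rw [Lp_succ, ih (fun a => c a.succ) (fun a => v a.succ), Lp_succ (v := v),
        Fin.prod_univ_succ]
      rw [smul_mul_smul_comm, mul_smul]

lemma Lp_reorder {p : ℕ} (π : Equiv.Perm (Fin p)) (v : Fin p → M)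
    (hc : ∀ a b, a ≠ b → Commute (v a) (v b)) : Lp (fun a => v (π a)) = Lp v := by
  refine List.Perm.prod_eq' (π.ofFn_comp_perm v) ?_
  rw [List.pairwise_ofFn]
  intro i j hij
  exact hc _ _ (fun h => absurd (π.injective h) hij.ne)

end Prods
end SOMN
namespace SOMN
set_option linter.unusedSectionVars false

section Comb
variable {p : ℕ}

lemma pos0_val (a : Fin p) : (pos0 a : ℕ) = 2 * a.1 := rfl
lemma pos1_val (a : Fin p) : (pos1 a : ℕ) = 2 * a.1 + 1 := rfl

lemma pos0_lt_pos1 (a : Fin p) : pos0 a < pos1 a := by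
  simp [Fin.lt_def, pos0_val, pos1_val]

lemma pos0_injective : Function.Injective (pos0 (p := p)) := by
  intro a b h
  have := congrArg Fin.val h
  simp only [pos0_val] at this
  exact Fin.ext (by omega)

lemma pos1_injective : Function.Injective (pos1 (p := p)) := by
  intro a b h
  have := congrArg Fin.val h
  simp only [pos1_val] at this
  exact Fin.ext (by omega)

lemma pos0_ne_pos1 (a b : Fin p) : pos0 a ≠ pos1 b := by
  intro h
  have := congrArg Fin.val h
  simp only [pos0_val, pos1_val] at this
  omega

def toP (s : Fin (2*p)) : Fin p := ⟨s.1 / 2, by have := s.2; omega⟩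
def toB (s : Fin (2*p)) : Bool := decide (s.1 % 2 = 1)
def ofPB (a : Fin p) (b : Bool) : Fin (2*p) := if b then pos1 a else pos0 a

lemma toP_pos0 (a : Fin p) : toP (pos0 a) = a := Fin.ext (by simp [toP, pos0_val])
lemma toP_pos1 (a : Fin p) : toP (pos1 a) = a := Fin.ext (by simp [toP, pos1_val]; omega)
lemma toB_pos0 (a : Fin p) : toB (pos0 a) = false := by simp [toB, pos0_val, Nat.mul_mod_right]
lemma toB_pos1 (a : Fin p) : toB (pos1 a) = true := by simp [toB, pos1_val, Nat.mul_add_mod]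

lemma ofPB_toP (s : Fin (2*p)) : ofPB (toP s) (toB s) = s := by
  unfold ofPB toB
  split <;> (rename_i h; simp only [decide_eq_true_eq] at h ⊢) <;>
    (apply Fin.ext; simp only [pos0_val, pos1_val, toP]) <;> omega

lemma toP_ofPB (a : Fin p) (b : Bool) : toP (ofPB a b) = a := by
  cases b <;> simp [ofPB, toP_pos0, toP_pos1]

lemma toB_ofPB (a : Fin p) (b : Bool) : toB (ofPB a b) = b := by
  cases b <;> simp [ofPB, toB_pos0, toB_pos1]

lemma pos_cases (s : Fin (2*p)) : s = pos0 (toP s) ∨ s = pos1 (toP s) := by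
  rcases Bool.eq_false_or_eq_true (toB s) with h | h
  · right
    conv_lhs => rw [← ofPB_toP s, h]
    rfl
  · left
    conv_lhs => rw [← ofPB_toP s, h]
    rfl

/-- Permutation flipping pairs indexed by `t`. -/
def flipFun (t : Finset (Fin p)) (s : Fin (2*p)) : Fin (2*p) :=
  if toP s ∈ t then ofPB (toP s) (!toB s) else s

lemma flipFun_invol (t : Finset (Fin p)) : Function.Involutive (flipFun t) := by
  intro s
  unfold flipFun
  split
  · rename_i h
    rw [if_pos (by rwa [toP_ofPB]), toP_ofPB, toB_ofPB, Bool.not_not, ofPB_toP]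
  · simp [*]

def flipPerm (t : Finset (Fin p)) : Equiv.Perm (Fin (2*p)) := (flipFun_invol t).toPerm

lemma flipPerm_pos0 (t : Finset (Fin p)) (a : Fin p) :
    flipPerm t (pos0 a) = if a ∈ t then pos1 a else pos0 a := by
  show flipFun t (pos0 a) = _
  unfold flipFun
  rw [toP_pos0, toB_pos0]
  rfl

lemma flipPerm_pos1 (t : Finset (Fin p)) (a : Fin p) :
    flipPerm t (pos1 a) = if a ∈ t then pos0 a else pos1 a := by
  show flipFun t (pos1 a) = _
  unfold flipFun
  rw [toP_pos1, toB_pos1]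
  rfl

lemma flipPerm_mul_self (t : Finset (Fin p)) : flipPerm t * flipPerm t = 1 :=
  Equiv.ext fun s => flipFun_invol t s

/-- Permutation permuting the pair blocks by `π`. -/
def blockPerm (π : Equiv.Perm (Fin p)) : Equiv.Perm (Fin (2*p)) where
  toFun s := ofPB (π (toP s)) (toB s)
  invFun s := ofPB (π⁻¹ (toP s)) (toB s)
  left_inv s := by
    show ofPB (π⁻¹ (toP (ofPB (π (toP s)) (toB s)))) (toB (ofPB (π (toP s)) (toB s))) = s
    rw [toP_ofPB, toB_ofPB, perm_inv_apply_self, ofPB_toP]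
  right_inv s := by
    show ofPB (π (toP (ofPB (π⁻¹ (toP s)) (toB s)))) (toB (ofPB (π⁻¹ (toP s)) (toB s))) = s
    rw [toP_ofPB, toB_ofPB, perm_apply_inv_self, ofPB_toP]

lemma blockPerm_apply (π : Equiv.Perm (Fin p)) (s : Fin (2*p)) :
    blockPerm π s = ofPB (π (toP s)) (toB s) := rfl

lemma blockPerm_pos0 (π : Equiv.Perm (Fin p)) (a : Fin p) :
    blockPerm π (pos0 a) = pos0 (π a) := by
  show ofPB (π (toP (pos0 a))) (toB (pos0 a)) = _
  rw [toP_pos0, toB_pos0]; rfl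

lemma blockPerm_pos1 (π : Equiv.Perm (Fin p)) (a : Fin p) :
    blockPerm π (pos1 a) = pos1 (π a) := by
  show ofPB (π (toP (pos1 a))) (toB (pos1 a)) = _
  rw [toP_pos1, toB_pos1]; rfl

lemma blockPerm_mul (π π' : Equiv.Perm (Fin p)) :
    blockPerm (π * π') = blockPerm π * blockPerm π' := by
  apply Equiv.ext
  intro s
  rw [Equiv.Perm.mul_apply]
  simp only [blockPerm_apply, toP_ofPB, toB_ofPB, Equiv.Perm.mul_apply]

lemma blockPerm_one : blockPerm (1 : Equiv.Perm (Fin p)) = 1 := by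
  apply Equiv.ext
  intro s
  rw [blockPerm_apply, Equiv.Perm.one_apply, ofPB_toP, Equiv.Perm.one_apply]

end Comb
end SOMN
namespace SOMN
set_option linter.unusedSectionVars false

section Signs
variable {p : ℕ}

lemma blockPerm_swap (x y : Fin p) :
    blockPerm (Equiv.swap x y) = Equiv.swap (pos0 x) (pos0 y) * Equiv.swap (pos1 x) (pos1 y) := by
  apply Equiv.ext
  intro s
  rcases pos_cases s with h | h <;> rw [h]
  · rw [blockPerm_pos0, Equiv.Perm.mul_apply,
      Equiv.swap_apply_of_ne_of_ne (pos0_ne_pos1 _ x) (pos0_ne_pos1 _ y)]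
    rcases eq_or_ne (toP s) x with rfl | hx
    · rw [Equiv.swap_apply_left, Equiv.swap_apply_left]
    · rcases eq_or_ne (toP s) y with rfl | hy
      · rw [Equiv.swap_apply_right, Equiv.swap_apply_right]
      · rw [Equiv.swap_apply_of_ne_of_ne hx hy,
          Equiv.swap_apply_of_ne_of_ne (fun hh => hx (pos0_injective hh))
            (fun hh => hy (pos0_injective hh))]
  · rw [blockPerm_pos1, Equiv.Perm.mul_apply]
    have houter : ∀ c : Fin p, Equiv.swap (pos0 x) (pos0 y) (pos1 c) = pos1 c := fun c =>
      Equiv.swap_apply_of_ne_of_ne (Ne.symm (pos0_ne_pos1 x c)) (Ne.symm (pos0_ne_pos1 y c))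
    rcases eq_or_ne (toP s) x with rfl | hx
    · rw [Equiv.swap_apply_left, Equiv.swap_apply_left, houter]
    · rcases eq_or_ne (toP s) y with rfl | hy
      · rw [Equiv.swap_apply_right, Equiv.swap_apply_right, houter]
      · rw [Equiv.swap_apply_of_ne_of_ne hx hy,
          Equiv.swap_apply_of_ne_of_ne (fun hh => hx (pos1_injective hh))
            (fun hh => hy (pos1_injective hh)), houter]

lemma sign_blockPerm (π : Equiv.Perm (Fin p)) : Equiv.Perm.sign (blockPerm π) = 1 := by
  refine Equiv.Perm.swap_induction_on π ?_ ?_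
  · rw [blockPerm_one, map_one]
  · intro f x y hxy hf
    rw [blockPerm_mul, map_mul, hf, blockPerm_swap, map_mul,
      Equiv.Perm.sign_swap (fun hh => hxy (pos0_injective hh)),
      Equiv.Perm.sign_swap (fun hh => hxy (pos1_injective hh))]
    simp

lemma flipPerm_empty : flipPerm (∅ : Finset (Fin p)) = 1 := by
  apply Equiv.ext
  intro s
  show flipFun ∅ s = s
  simp [flipFun]

lemma flipPerm_insert (t : Finset (Fin p)) (a : Fin p) (ha : a ∉ t) :
    flipPerm (insert a t) = Equiv.swap (pos0 a) (pos1 a) * flipPerm t := by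
  apply Equiv.ext
  intro s
  rw [Equiv.Perm.mul_apply]
  rcases pos_cases s with h | h <;> rw [h]
  · rw [flipPerm_pos0, flipPerm_pos0]
    rcases eq_or_ne (toP s) a with rfl | hca
    · rw [if_pos (Finset.mem_insert_self _ t), if_neg ha, Equiv.swap_apply_left]
    · by_cases hct : toP s ∈ t
      · rw [if_pos (Finset.mem_insert_of_mem hct), if_pos hct,
          Equiv.swap_apply_of_ne_of_ne (Ne.symm (pos0_ne_pos1 a _))
            (fun hh => hca (pos1_injective hh))]
      · rw [if_neg (by simp [Finset.mem_insert, hca, hct]), if_neg hct,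
          Equiv.swap_apply_of_ne_of_ne (fun hh => hca (pos0_injective hh)) (pos0_ne_pos1 _ a)]
  · rw [flipPerm_pos1, flipPerm_pos1]
    rcases eq_or_ne (toP s) a with rfl | hca
    · rw [if_pos (Finset.mem_insert_self _ t), if_neg ha, Equiv.swap_apply_right]
    · by_cases hct : toP s ∈ t
      · rw [if_pos (Finset.mem_insert_of_mem hct), if_pos hct,
          Equiv.swap_apply_of_ne_of_ne (fun hh => hca (pos0_injective hh)) (pos0_ne_pos1 _ a)]
      · rw [if_neg (by simp [Finset.mem_insert, hca, hct]), if_neg hct,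
          Equiv.swap_apply_of_ne_of_ne (Ne.symm (pos0_ne_pos1 a _))
            (fun hh => hca (pos1_injective hh))]

lemma sign_flipPerm (t : Finset (Fin p)) :
    Equiv.Perm.sign (flipPerm t) = (-1) ^ t.card := by
  classical
  induction t using Finset.induction_on with
  | empty => rw [flipPerm_empty]; simp
  | @insert a t ha ih =>
      rw [flipPerm_insert t a ha, map_mul, ih, Equiv.Perm.sign_swap (pos0_ne_pos1 a a),
        Finset.card_insert_of_notMem ha, pow_succ]
      exact mul_comm _ _

lemma prod_sign_t (t : Finset (Fin p)) :
    (∏ a, if a ∈ t then (-1:ℂ) else 1) = (-1) ^ t.card := by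
  classical
  have h1 : ∀ a ∈ Finset.univ.filter (· ∈ t), (if a ∈ t then (-1:ℂ) else 1) = -1 := by
    intro a haa
    rw [Finset.mem_filter] at haa
    rw [if_pos haa.2]
  have h2 : ∀ a ∈ Finset.univ.filter (fun a => ¬ a ∈ t), (if a ∈ t then (-1:ℂ) else 1) = 1 := by
    intro a haa
    rw [Finset.mem_filter] at haa
    rw [if_neg haa.2]
  rw [← Finset.prod_filter_mul_prod_filter_not Finset.univ (· ∈ t),
    Finset.prod_congr rfl h1, Finset.prod_congr rfl h2, Finset.prod_const, Finset.prod_const,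
    one_pow, mul_one, Finset.filter_univ_mem]

lemma Pplus_iff {N' : ℕ} (f : Fin (2*p) → Fin N') (hf : StrictMono f)
    (τ : Equiv.Perm (Fin (2*p))) :
    Pplus f τ ↔ (StrictMono fun a => τ (pos0 a)) ∧ ∀ a, τ (pos0 a) < τ (pos1 a) := by
  unfold Pplus
  constructor
  · rintro ⟨h1, h2⟩
    exact ⟨fun a b hab => hf.lt_iff_lt.1 (h1 hab), fun a => hf.lt_iff_lt.1 (h2 a)⟩
  · rintro ⟨h1, h2⟩
    exact ⟨fun a b hab => hf (h1 hab), fun a => hf (h2 a)⟩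

end Signs
end SOMN
namespace SOMN
set_option linter.unusedSectionVars false

section Bij
variable {p : ℕ}

lemma E_pos0 (τ₀ : Equiv.Perm (Fin (2*p))) (t : Finset (Fin p)) (π : Equiv.Perm (Fin p))
    (a : Fin p) : (τ₀ * blockPerm π * flipPerm t) (pos0 a)
      = if a ∈ t then τ₀ (pos1 (π a)) else τ₀ (pos0 (π a)) := by
  rw [Equiv.Perm.mul_apply, Equiv.Perm.mul_apply, flipPerm_pos0]
  split
  · rw [blockPerm_pos1]
  · rw [blockPerm_pos0]

lemma E_pos1 (τ₀ : Equiv.Perm (Fin (2*p))) (t : Finset (Fin p)) (π : Equiv.Perm (Fin p))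
    (a : Fin p) : (τ₀ * blockPerm π * flipPerm t) (pos1 a)
      = if a ∈ t then τ₀ (pos0 (π a)) else τ₀ (pos1 (π a)) := by
  rw [Equiv.Perm.mul_apply, Equiv.Perm.mul_apply, flipPerm_pos1]
  split
  · rw [blockPerm_pos0]
  · rw [blockPerm_pos1]

lemma E_min (τ₀ : Equiv.Perm (Fin (2*p))) (t : Finset (Fin p)) (π : Equiv.Perm (Fin p))
    (LT : ∀ a, τ₀ (pos0 a) < τ₀ (pos1 a)) (a : Fin p) :
    min ((τ₀ * blockPerm π * flipPerm t) (pos0 a)) ((τ₀ * blockPerm π * flipPerm t) (pos1 a))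
      = τ₀ (pos0 (π a)) := by
  rw [E_pos0, E_pos1]
  by_cases hat : a ∈ t
  · rw [if_pos hat, if_pos hat, min_eq_right (le_of_lt (LT (π a)))]
  · rw [if_neg hat, if_neg hat, min_eq_left (le_of_lt (LT (π a)))]

lemma E_max (τ₀ : Equiv.Perm (Fin (2*p))) (t : Finset (Fin p)) (π : Equiv.Perm (Fin p))
    (LT : ∀ a, τ₀ (pos0 a) < τ₀ (pos1 a)) (a : Fin p) :
    max ((τ₀ * blockPerm π * flipPerm t) (pos0 a)) ((τ₀ * blockPerm π * flipPerm t) (pos1 a))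
      = τ₀ (pos1 (π a)) := by
  rw [E_pos0, E_pos1]
  by_cases hat : a ∈ t
  · rw [if_pos hat, if_pos hat, max_eq_left (le_of_lt (LT (π a)))]
  · rw [if_neg hat, if_neg hat, max_eq_right (le_of_lt (LT (π a)))]

lemma E_bijective {N' : ℕ} (f : Fin (2*p) → Fin N') (hf : StrictMono f) :
    Function.Bijective (fun x : {τ : Equiv.Perm (Fin (2*p)) // Pplus f τ} ×
        Finset (Fin p) × Equiv.Perm (Fin p) =>
      x.1.1 * blockPerm x.2.2 * flipPerm x.2.1) := by
  classical
  constructor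
  · rintro ⟨⟨τ₀, hτ₀⟩, t, π⟩ ⟨⟨τ₀', hτ₀'⟩, t', π'⟩ hE
    simp only at hE
    obtain ⟨SM, LT⟩ := (Pplus_iff f hf τ₀).1 hτ₀
    obtain ⟨SM', LT'⟩ := (Pplus_iff f hf τ₀').1 hτ₀'
    have hmin : ∀ a, τ₀ (pos0 (π a)) = τ₀' (pos0 (π' a)) := by
      intro a
      rw [← E_min τ₀ t π LT a, ← E_min τ₀' t' π' LT' a, hE]
    have hmax : ∀ a, τ₀ (pos1 (π a)) = τ₀' (pos1 (π' a)) := by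
      intro a
      rw [← E_max τ₀ t π LT a, ← E_max τ₀' t' π' LT' a, hE]
    -- the strictly increasing enumerations agree
    have hginj : Function.Injective (fun a => τ₀ (pos0 a)) := SM.injective
    have hg'inj : Function.Injective (fun a => τ₀' (pos0 a)) := SM'.injective
    set s : Finset (Fin (2*p)) := Finset.image (fun a => τ₀ (pos0 a)) Finset.univ with hs
    have hcard : s.card = p := by
      rw [hs, Finset.card_image_of_injective _ hginj, Finset.card_univ, Fintype.card_fin]
    have hs' : Finset.image (fun a => τ₀' (pos0 a)) Finset.univ = s := by
      rw [hs]
      apply Finset.ext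
      intro b
      simp only [Finset.mem_image, Finset.mem_univ, true_and]
      constructor
      · rintro ⟨a, rfl⟩
        exact ⟨π (π'⁻¹ a), by rw [hmin (π'⁻¹ a), perm_apply_inv_self]⟩
      · rintro ⟨a, rfl⟩
        exact ⟨π' (π⁻¹ a), by rw [← hmin (π⁻¹ a), perm_apply_inv_self]⟩
    have hmem : ∀ a, (fun a => τ₀ (pos0 a)) a ∈ s := fun a =>
      Finset.mem_image_of_mem _ (Finset.mem_univ a)
    have hmem' : ∀ a, (fun a => τ₀' (pos0 a)) a ∈ s := fun a => by
      rw [← hs']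
      exact Finset.mem_image_of_mem _ (Finset.mem_univ a)
    have hgg' : (fun a => τ₀ (pos0 a)) = fun a => τ₀' (pos0 a) := by
      rw [Finset.orderEmbOfFin_unique hcard hmem SM,
        Finset.orderEmbOfFin_unique hcard hmem' SM']
    have hππ' : π = π' := by
      apply Equiv.ext
      intro a
      apply hginj
      show τ₀ (pos0 (π a)) = τ₀ (pos0 (π' a))
      rw [hmin a]
      exact (congrFun hgg' (π' a)).symm
    have hτ₀₀' : τ₀ = τ₀' := by
      apply Equiv.ext
      intro x
      rcases pos_cases x with h | h <;> rw [h]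
      · exact congrFun hgg' (toP x)
      · have h2 := hmax (π'⁻¹ (toP x))
        rw [hππ'] at h2
        rwa [perm_apply_inv_self] at h2
    have htt' : t = t' := by
      apply Finset.ext
      intro a
      have e1 := E_pos0 τ₀ t π a
      have e2 := E_pos0 τ₀' t' π' a
      rw [hE] at e1
      rw [e2] at e1
      constructor
      · intro hat
        by_contra hat'
        rw [if_pos hat, if_neg hat', hτ₀₀', hππ'] at e1
        exact pos0_ne_pos1 _ _ (τ₀'.injective e1)
      · intro hat'
        by_contra hat
        rw [if_neg hat, if_pos hat', hτ₀₀', hππ'] at e1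
        exact pos0_ne_pos1 _ _ (τ₀'.injective e1).symm
    refine Prod.ext ?_ (Prod.ext htt' hππ')
    exact Subtype.ext hτ₀₀'
  · intro τ
    set t : Finset (Fin p) := Finset.univ.filter (fun b => τ (pos1 b) < τ (pos0 b)) with ht
    set μ : Fin p → Fin (2*p) := fun b => min (τ (pos0 b)) (τ (pos1 b)) with hμ
    have hμinj : Function.Injective μ := by
      intro a b hab
      have hab' : min (τ (pos0 a)) (τ (pos1 a)) = min (τ (pos0 b)) (τ (pos1 b)) := hab
      rcases min_choice (τ (pos0 a)) (τ (pos1 a)) with h1 | h1 <;>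
        rcases min_choice (τ (pos0 b)) (τ (pos1 b)) with h2 | h2 <;>
        rw [h1, h2] at hab' <;> have h3 := τ.injective hab'
      · exact pos0_injective h3
      · exact absurd h3 (pos0_ne_pos1 a b)
      · exact absurd h3.symm (pos0_ne_pos1 b a)
      · exact pos1_injective h3
    set ς := Tuple.sort μ with hς
    have hsm : StrictMono (μ ∘ ς) :=
      (Tuple.monotone_sort μ).strictMono_of_injective (hμinj.comp ς.injective)
    set τ₀ := τ * flipPerm t * blockPerm ς with hτ₀
    have h0 : ∀ a, τ₀ (pos0 a) = μ (ς a) := by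
      intro a
      rw [hτ₀, Equiv.Perm.mul_apply, Equiv.Perm.mul_apply, blockPerm_pos0, flipPerm_pos0]
      by_cases hm : ς a ∈ t
      · rw [if_pos hm, ht] at *
        rw [hμ]
        rw [Finset.mem_filter] at hm
        exact (min_eq_right (le_of_lt hm.2)).symm
      · rw [if_neg hm, hμ]
        rw [ht, Finset.mem_filter] at hm
        push_neg at hm
        exact (min_eq_left (hm (Finset.mem_univ _))).symm
    have hne : ∀ b, τ (pos0 b) ≠ τ (pos1 b) := fun b hb =>
      pos0_ne_pos1 b b (τ.injective hb)
    have h1 : ∀ a, τ₀ (pos1 a) = max (τ (pos0 (ς a))) (τ (pos1 (ς a))) := by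
      intro a
      rw [hτ₀, Equiv.Perm.mul_apply, Equiv.Perm.mul_apply, blockPerm_pos1, flipPerm_pos1]
      by_cases hm : ς a ∈ t
      · rw [if_pos hm, ht] at *
        rw [Finset.mem_filter] at hm
        exact (max_eq_left (le_of_lt hm.2)).symm
      · rw [if_neg hm]
        rw [ht, Finset.mem_filter] at hm
        push_neg at hm
        exact (max_eq_right (hm (Finset.mem_univ _))).symm
    have hPp : Pplus f τ₀ := by
      rw [Pplus_iff f hf]
      constructor
      · intro a b hab
        show τ₀ (pos0 a) < τ₀ (pos0 b)
        rw [h0, h0]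
        exact hsm hab
      · intro a
        rw [h0, h1]
        exact min_lt_max.2 (hne (ς a))
    refine ⟨⟨⟨τ₀, hPp⟩, t, ς⁻¹⟩, ?_⟩
    simp only
    have hb : blockPerm ς * blockPerm ς⁻¹ = 1 := by
      rw [← blockPerm_mul, mul_inv_cancel, blockPerm_one]
    have step : τ₀ * blockPerm ς⁻¹ * flipPerm t
        = τ * flipPerm t * (blockPerm ς * blockPerm ς⁻¹) * flipPerm t := by
      rw [hτ₀, mul_assoc (τ * flipPerm t) (blockPerm ς) (blockPerm ς⁻¹)]
    rw [step, hb, mul_one, mul_assoc, flipPerm_mul_self, mul_one]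

end Bij

section CL
variable {M : Type*} [Ring M] [Algebra ℂ M] {N' p : ℕ}

lemma CL (f : Fin (2*p) → Fin N') (hf : StrictMono f) (w : Fin N' → Fin N' → M)
    (hanti : ∀ i j, w j i = - w i j)
    (hcomm : ∀ i j k l : Fin N', i ≠ k → i ≠ l → j ≠ k → j ≠ l → Commute (w i j) (w k l)) :
    ∑ τ : Equiv.Perm (Fin (2*p)), ((Equiv.Perm.sign τ : ℤ) : ℂ) •
        Lp (fun a => w (f (τ (pos0 a))) (f (τ (pos1 a))))
      = ((2^p * p.factorial : ℕ) : ℂ) • ∑ τ : Equiv.Perm (Fin (2*p)),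
          if Pplus f τ then ((Equiv.Perm.sign τ : ℤ) : ℂ) •
            Lp (fun a => w (f (τ (pos0 a))) (f (τ (pos1 a)))) else 0 := by
  classical
  set G : Equiv.Perm (Fin (2*p)) → M := fun τ => ((Equiv.Perm.sign τ : ℤ) : ℂ) •
      Lp (fun a => w (f (τ (pos0 a))) (f (τ (pos1 a)))) with hG
  have hinv : ∀ (τ₀ : Equiv.Perm (Fin (2*p))), Pplus f τ₀ →
      ∀ (t : Finset (Fin p)) (π : Equiv.Perm (Fin p)),
      G (τ₀ * blockPerm π * flipPerm t) = G τ₀ := by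
    intro τ₀ hτ₀ t π
    obtain ⟨SM, LT⟩ := (Pplus_iff f hf τ₀).1 hτ₀
    have hfac : (fun a => w (f ((τ₀ * blockPerm π * flipPerm t) (pos0 a)))
          (f ((τ₀ * blockPerm π * flipPerm t) (pos1 a))))
        = fun a => (if a ∈ t then (-1:ℂ) else 1) •
            w (f (τ₀ (pos0 (π a)))) (f (τ₀ (pos1 (π a)))) := by
      funext a
      rw [E_pos0, E_pos1]
      by_cases hat : a ∈ t
      · rw [if_pos hat, if_pos hat, if_pos hat, hanti, neg_one_smul]
      · rw [if_neg hat, if_neg hat, if_neg hat, one_smul]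
    have hcomm' : ∀ a b : Fin p, a ≠ b →
        Commute (w (f (τ₀ (pos0 a))) (f (τ₀ (pos1 a))))
          (w (f (τ₀ (pos0 b))) (f (τ₀ (pos1 b)))) := by
      intro a b hab
      have hne : ∀ (x y : Fin (2*p)), x ≠ y → f (τ₀ x) ≠ f (τ₀ y) := fun x y hxy hh =>
        hxy (τ₀.injective (hf.injective hh))
      exact hcomm _ _ _ _ (hne _ _ (fun hh => hab (pos0_injective hh)))
        (hne _ _ (pos0_ne_pos1 a b)) (hne _ _ (Ne.symm (pos0_ne_pos1 b a)))
        (hne _ _ (fun hh => hab (pos1_injective hh)))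
    simp only [hG]
    rw [hfac, Lp_smul, Lp_reorder π _ hcomm', prod_sign_t]
    rw [map_mul, map_mul, sign_blockPerm, mul_one, sign_flipPerm]
    rw [smul_smul]
    congr 1
    push_cast
    rw [mul_assoc]
    have : ((-1:ℂ))^t.card * (-1)^t.card = 1 := by
      rw [← pow_add]
      exact Even.neg_one_pow ⟨t.card, rfl⟩
    rw [this, mul_one]
  calc ∑ τ : Equiv.Perm (Fin (2*p)), G τ
      = ∑ x : {τ : Equiv.Perm (Fin (2*p)) // Pplus f τ} ×
          Finset (Fin p) × Equiv.Perm (Fin p),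
          G (x.1.1 * blockPerm x.2.2 * flipPerm x.2.1) :=
        (Fintype.sum_bijective _ (E_bijective f hf) _ G (fun x => rfl)).symm
    _ = ∑ x : {τ : Equiv.Perm (Fin (2*p)) // Pplus f τ} ×
          Finset (Fin p) × Equiv.Perm (Fin p), G x.1.1 :=
        Finset.sum_congr rfl (fun x _ => hinv x.1.1 x.1.2 x.2.1 x.2.2)
    _ = ∑ τ₀ : {τ : Equiv.Perm (Fin (2*p)) // Pplus f τ},
          (Fintype.card (Finset (Fin p) × Equiv.Perm (Fin p))) • G τ₀.1 := by
        rw [Fintype.sum_prod_type]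
        refine Finset.sum_congr rfl (fun τ₀ _ => ?_)
        show (∑ _y : Finset (Fin p) × Equiv.Perm (Fin p), G ↑τ₀) = _
        rw [Finset.sum_const, Finset.card_univ]
    _ = ((2^p * p.factorial : ℕ) : ℂ) • ∑ τ₀ : {τ : Equiv.Perm (Fin (2*p)) // Pplus f τ},
          G τ₀.1 := by
        rw [Finset.smul_sum]
        refine Finset.sum_congr rfl (fun τ₀ _ => ?_)
        rw [Nat.cast_smul_eq_nsmul]
        congr 1
        rw [Fintype.card_prod, Fintype.card_finset, Fintype.card_perm, Fintype.card_fin]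
    _ = ((2^p * p.factorial : ℕ) : ℂ) • ∑ τ : Equiv.Perm (Fin (2*p)),
          if Pplus f τ then G τ else 0 := by
        congr 1
        rw [← Finset.sum_filter]
        exact (Finset.sum_subtype _ (by simp) G).symm

end CL
end SOMN
namespace SOMN
set_option linter.unusedSectionVars false

section MatrixFacts
variable {m n : ℕ}

/-- D = diag(1_m, i·1_n). -/
def Dm (m n : ℕ) : Matrix (Fin (m+n)) (Fin (m+n)) ℂ :=
  Matrix.diagonal fun i => if (i : ℕ) < m then 1 else Complex.I

/-- D⁻¹ = diag(1_m, −i·1_n). -/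
def Dmi (m n : ℕ) : Matrix (Fin (m+n)) (Fin (m+n)) ℂ :=
  Matrix.diagonal fun i => if (i : ℕ) < m then 1 else -Complex.I

lemma Dm_mul_Dmi : Dm m n * Dmi m n = 1 := by
  rw [Dm, Dmi, Matrix.diagonal_mul_diagonal, ← Matrix.diagonal_one]
  have hd : (fun i : Fin (m+n) => (if (i:ℕ) < m then (1:ℂ) else Complex.I) *
      (if (i:ℕ) < m then 1 else -Complex.I)) = fun _ => (1:ℂ) := by
    funext i
    by_cases h : (i : ℕ) < m
    · rw [if_pos h, if_pos h, one_mul]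
    · rw [if_neg h, if_neg h, mul_neg, Complex.I_mul_I, neg_neg]
  rw [hd]

lemma Dmi_mul_Dm : Dmi m n * Dm m n = 1 := by
  rw [Dm, Dmi, Matrix.diagonal_mul_diagonal, ← Matrix.diagonal_one]
  have hd : (fun i : Fin (m+n) => (if (i:ℕ) < m then (1:ℂ) else -Complex.I) *
      (if (i:ℕ) < m then 1 else Complex.I)) = fun _ => (1:ℂ) := by
    funext i
    by_cases h : (i : ℕ) < m
    · rw [if_pos h, if_pos h, one_mul]
    · rw [if_neg h, if_neg h, neg_mul, Complex.I_mul_I, neg_neg]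
  rw [hd]

lemma Dm_mul_Dm : Dm m n * Dm m n = Jmn m n := by
  rw [Dm, Jmn, Matrix.diagonal_mul_diagonal]
  have hd : (fun i : Fin (m+n) => (if (i:ℕ) < m then (1:ℂ) else Complex.I) *
      (if (i:ℕ) < m then 1 else Complex.I)) = fun i : Fin (m+n) =>
        if (i:ℕ) < m then (1:ℂ) else -1 := by
    funext i
    by_cases h : (i : ℕ) < m
    · simp only [if_pos h, one_mul]
    · simp only [if_neg h, Complex.I_mul_I]
  rw [hd]

lemma Dm_transpose : (Dm m n)ᵀ = Dm m n := Matrix.diagonal_transpose _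
lemma Dmi_transpose : (Dmi m n)ᵀ = Dmi m n := Matrix.diagonal_transpose _

/-- Ỹ_{ij} = E_{ji} − E_{ij}. -/
def Ytil (i j : Fin (m+n)) : Matrix (Fin (m+n)) (Fin (m+n)) ℂ :=
  Matrix.single j i 1 - Matrix.single i j 1

lemma std_neg {k : ℕ} (i j : Fin k) (c : ℂ) :
    Matrix.single i j (-c) = -Matrix.single i j c := by
  ext a b
  simp only [Matrix.single, Matrix.neg_apply, Matrix.of_apply]
  split_ifs <;> simp

lemma DYD (i j : Fin (m+n)) : Dmi m n * Ytil i j * Dm m n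
    = Matrix.single j i
        ((if (j : ℕ) < m then 1 else -Complex.I) * (if (i : ℕ) < m then 1 else Complex.I))
      - Matrix.single i j
        ((if (i : ℕ) < m then 1 else -Complex.I) * (if (j : ℕ) < m then 1 else Complex.I)) := by
  rw [Ytil, Dmi, Dm, Matrix.mul_sub, Matrix.sub_mul, diag_mul_std, diag_mul_std,
    std_mul_diag, std_mul_diag]
  congr 2 <;> ring

lemma Xbar_val (i j : Fin (m+n)) :
    ((Xbar i j : gC m n) : Matrix (Fin (m+n)) (Fin (m+n)) ℂ) = Dmi m n * Ytil i j * Dm m n := by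
  have hII : -Complex.I * Complex.I = 1 := by
    rw [neg_mul, Complex.I_mul_I, neg_neg]
  rw [DYD]
  by_cases h1 : ((i:ℕ) < m ∧ (j:ℕ) < m) ∨ (m ≤ (i:ℕ) ∧ m ≤ (j:ℕ))
  · unfold Xbar
    rw [dif_pos h1]
    rcases h1 with ⟨hi, hj⟩ | ⟨hi, hj⟩
    · simp only [if_pos hi, if_pos hj, one_mul]
    · simp only [if_neg (show ¬ ((i:ℕ) < m) by omega), if_neg (show ¬ ((j:ℕ) < m) by omega), hII]
  · unfold Xbar
    rw [dif_neg h1]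
    by_cases h2 : (i:ℕ) < m
    · have hj : ¬ ((j : ℕ) < m) := by omega
      rw [dif_pos h2]
      simp only [if_pos h2, if_neg hj, one_mul, mul_one]
      show (-Complex.I) • (Matrix.single j i 1 + Matrix.single i j 1) = _
      rw [smul_add, Matrix.smul_single, Matrix.smul_single]
      simp only [smul_eq_mul, mul_one]
      rw [show Matrix.single i j (-Complex.I) = -Matrix.single i j Complex.I from
          std_neg i j Complex.I, sub_eq_add_neg]
    · have hj : (j:ℕ) < m := by omega
      rw [dif_neg h2]
      simp only [if_neg h2, if_pos hj, one_mul, mul_one]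
      show Complex.I • (Matrix.single j i 1 + Matrix.single i j 1) = _
      rw [smul_add, Matrix.smul_single, Matrix.smul_single]
      simp only [smul_eq_mul, mul_one]
      rw [show Matrix.single i j (-Complex.I) = -Matrix.single i j Complex.I from
          std_neg i j Complex.I, sub_neg_eq_add]

lemma mul_std_mul {N : ℕ} (A B : Matrix (Fin N) (Fin N) ℂ) (i j a b : Fin N) :
    (A * Matrix.single i j (1:ℂ) * B) a b = A a i * B j b := by
  rw [Matrix.mul_apply, Finset.sum_eq_single j]
  · rw [Matrix.mul_single_apply_same, mul_one]
  · intro y _ hy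
    rw [Matrix.mul_single_apply_of_ne (c := (1:ℂ)) i j a y hy A, zero_mul]
  · simp

end MatrixFacts
end SOMN
namespace SOMN
set_option linter.unusedSectionVars false

section MatrixFacts2
variable {m n : ℕ}

lemma conj_Ytil (A : Matrix (Fin (m+n)) (Fin (m+n)) ℂ) (k l : Fin (m+n)) :
    A * Ytil k l * Aᵀ = ∑ u : Fin (m+n), ∑ w : Fin (m+n), (A u k * A w l) • Ytil u w := by
  ext a b
  rw [Ytil, Matrix.mul_sub, Matrix.sub_mul, Matrix.sub_apply, mul_std_mul, mul_std_mul,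
    Matrix.transpose_apply, Matrix.transpose_apply]
  simp only [Matrix.sum_apply, Matrix.smul_apply, Ytil, Matrix.sub_apply, smul_eq_mul,
    Matrix.single, Matrix.of_apply, mul_sub, mul_ite, mul_one, mul_zero]
  rw [Finset.sum_comm]
  simp only [Finset.sum_sub_distrib]
  congr 1
  · rw [Finset.sum_comm]
    simp [Finset.sum_ite_eq, Finset.sum_ite_eq', ite_and]
    try rw [mul_comm]
  · simp [Finset.sum_ite_eq, Finset.sum_ite_eq', ite_and]
    try rw [mul_comm]

lemma Xbar_anti (i j : Fin (m+n)) : Xbar j i = -Xbar i j := by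
  apply Subtype.ext
  have hcoe : ((-Xbar i j : gC m n) : Matrix (Fin (m+n)) (Fin (m+n)) ℂ)
      = -((Xbar i j : gC m n) : Matrix (Fin (m+n)) (Fin (m+n)) ℂ) := rfl
  rw [hcoe, Xbar_val, Xbar_val, show Ytil (m:=m) (n:=n) j i = -Ytil i j by
    rw [Ytil, Ytil, neg_sub], Matrix.mul_neg, Matrix.neg_mul]

lemma Ytil_mul_zero (i j k l : Fin (m+n)) (hik : i ≠ k) (hil : i ≠ l) (hjk : j ≠ k)
    (hjl : j ≠ l) : Ytil (m:=m) (n:=n) i j * Ytil k l = 0 := by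
  rw [Ytil, Ytil, sub_mul, mul_sub, mul_sub,
    Matrix.single_mul_single_of_ne (c := (1:ℂ)) _ _ _ hil, Matrix.single_mul_single_of_ne (c := (1:ℂ)) _ _ _ hik,
    Matrix.single_mul_single_of_ne (c := (1:ℂ)) _ _ _ hjl, Matrix.single_mul_single_of_ne (c := (1:ℂ)) _ _ _ hjk]
  simp

lemma Xbar_mul_zero (i j k l : Fin (m+n)) (hik : i ≠ k) (hil : i ≠ l) (hjk : j ≠ k)
    (hjl : j ≠ l) :
    ((Xbar i j : gC m n) : Matrix (Fin (m+n)) (Fin (m+n)) ℂ) *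
      ((Xbar k l : gC m n) : Matrix (Fin (m+n)) (Fin (m+n)) ℂ) = 0 := by
  rw [Xbar_val, Xbar_val,
    Matrix.mul_assoc (Dmi m n * Ytil i j) (Dm m n) (Dmi m n * Ytil k l * Dm m n),
    show Dm m n * (Dmi m n * Ytil k l * Dm m n) = Dm m n * Dmi m n * Ytil k l * Dm m n by
      rw [Matrix.mul_assoc, Matrix.mul_assoc, Matrix.mul_assoc],
    Dm_mul_Dmi, Matrix.one_mul, Matrix.mul_assoc (Dmi m n) (Ytil i j) (Ytil k l * Dm m n),
    show Ytil (m:=m) (n:=n) i j * (Ytil k l * Dm m n) = Ytil i j * Ytil k l * Dm m n by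
      rw [Matrix.mul_assoc],
    Ytil_mul_zero i j k l hik hil hjk hjl, Matrix.zero_mul, Matrix.mul_zero]

lemma Xbar_bracket_zero (i j k l : Fin (m+n)) (hik : i ≠ k) (hil : i ≠ l) (hjk : j ≠ k)
    (hjl : j ≠ l) : ⁅(Xbar i j : gC m n), (Xbar k l : gC m n)⁆ = 0 := by
  apply Subtype.ext
  rw [LieSubalgebra.coe_bracket, Ring.lie_def, Xbar_mul_zero i j k l hik hil hjk hjl,
    Xbar_mul_zero k l i j hik.symm hjk.symm hil.symm hjl.symm, sub_zero]
  rfl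

lemma commute_iota {x y : gC m n} (h : ⁅x, y⁆ = 0) : Commute (ι x) (ι y) := by
  have h2 := (UniversalEnvelopingAlgebra.ι ℂ (L := gC m n)).map_lie x y
  rw [h, map_zero, Ring.lie_def] at h2
  exact (sub_eq_zero.mp h2.symm)

lemma iota_sum {κ : Type*} [Fintype κ] (v : κ → gC m n) :
    ι (∑ k, v k) = ∑ k, ι (v k) :=
  map_sum (UniversalEnvelopingAlgebra.ι ℂ (L := gC m n)).toLinearMap v Finset.univ

lemma iota_smul (c : ℂ) (x : gC m n) : ι (c • x) = c • ι x :=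
  map_smul (UniversalEnvelopingAlgebra.ι ℂ (L := gC m n)).toLinearMap c x

lemma iota_neg (x : gC m n) : ι (-x) = -ι x :=
  map_neg (UniversalEnvelopingAlgebra.ι ℂ (L := gC m n)).toLinearMap x

end MatrixFacts2
end SOMN
namespace SOMN
set_option linter.unusedSectionVars false

section ConjFacts
variable {m n : ℕ}

lemma gC_eqn (X : gC m n) :
    (X : Matrix (Fin (m+n)) (Fin (m+n)) ℂ)ᵀ * Jmn m n = -(Jmn m n * X) := by
  have hX := X.2
  rw [mem_skewAdjointMatricesLieSubalgebra, mem_skewAdjointMatricesSubmodule] at hX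
  have h2 : (X : Matrix (Fin (m+n)) (Fin (m+n)) ℂ)ᵀ * Jmn m n
      = Jmn m n * (-(X : Matrix (Fin (m+n)) (Fin (m+n)) ℂ)) := hX
  rw [h2, Matrix.mul_neg]

lemma Jmn_det_ne_zero : (Jmn m n).det ≠ 0 := by
  rw [Jmn, Matrix.det_diagonal]
  apply Finset.prod_ne_zero_iff.2
  intro i _
  split
  · exact one_ne_zero
  · exact neg_ne_zero.2 one_ne_zero

lemma Jmn_transpose : (Jmn m n)ᵀ = Jmn m n := Matrix.diagonal_transpose _

lemma cancel_DmDmi (X : Matrix (Fin (m+n)) (Fin (m+n)) ℂ) : Dm m n * (Dmi m n * X) = X := by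
  rw [← Matrix.mul_assoc, Dm_mul_Dmi, Matrix.one_mul]

lemma cancel_DmiDm (X : Matrix (Fin (m+n)) (Fin (m+n)) ℂ) : Dmi m n * (Dm m n * X) = X := by
  rw [← Matrix.mul_assoc, Dmi_mul_Dm, Matrix.one_mul]

variable (gc : Matrix (Fin (m+n)) (Fin (m+n)) ℂ)

lemma gc_det_isUnit (hrel : gcᵀ * Jmn m n * gc = Jmn m n) : IsUnit gc.det := by
  have h := congrArg Matrix.det hrel
  rw [Matrix.det_mul, Matrix.det_mul, Matrix.det_transpose] at h
  have h2 : gc.det * gc.det * (Jmn m n).det = 1 * (Jmn m n).det := by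
    linear_combination h
  exact IsUnit.of_mul_eq_one _ (mul_right_cancel₀ Jmn_det_ne_zero h2)

lemma gc_mul_inv (hrel : gcᵀ * Jmn m n * gc = Jmn m n) : gc * gc⁻¹ = 1 :=
  Matrix.mul_nonsing_inv gc (gc_det_isUnit gc hrel)
lemma gc_inv_mul (hrel : gcᵀ * Jmn m n * gc = Jmn m n) : gc⁻¹ * gc = 1 :=
  Matrix.nonsing_inv_mul gc (gc_det_isUnit gc hrel)

lemma gcT_J (hrel : gcᵀ * Jmn m n * gc = Jmn m n) : gcᵀ * Jmn m n = Jmn m n * gc⁻¹ := by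
  have h := congrArg (fun A => A * gc⁻¹) hrel
  rw [Matrix.mul_assoc (gcᵀ * Jmn m n) gc gc⁻¹, gc_mul_inv gc hrel, Matrix.mul_one] at h
  exact h

lemma gcinvT_J (hrel : gcᵀ * Jmn m n * gc = Jmn m n) : (gc⁻¹)ᵀ * Jmn m n = Jmn m n * gc := by
  have h := congrArg Matrix.transpose (gcT_J gc hrel)
  rw [Matrix.transpose_mul, Matrix.transpose_mul, Matrix.transpose_transpose, Jmn_transpose] at h
  exact h.symm

lemma conj_mem_gC (hrel : gcᵀ * Jmn m n * gc = Jmn m n) (X : gC m n) :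
    gc * (X : Matrix (Fin (m+n)) (Fin (m+n)) ℂ) * gc⁻¹ ∈ gC m n := by
  apply mem_gC
  have hX := gC_eqn X
  rw [Matrix.transpose_mul, Matrix.transpose_mul]
  simp only [Matrix.mul_assoc]
  rw [gcT_J gc hrel]
  rw [← Matrix.mul_assoc (X : Matrix (Fin (m+n)) (Fin (m+n)) ℂ)ᵀ (Jmn m n) gc⁻¹, hX,
    Matrix.neg_mul, Matrix.mul_neg]
  simp only [Matrix.mul_assoc]
  rw [← Matrix.mul_assoc (gc⁻¹)ᵀ (Jmn m n), gcinvT_J gc hrel]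
  simp only [Matrix.mul_assoc]

lemma hM_orthoT (hrel : gcᵀ * Jmn m n * gc = Jmn m n) :
    (Dm m n * gc * Dmi m n)ᵀ * (Dm m n * gc * Dmi m n) = 1 := by
  rw [Matrix.transpose_mul, Matrix.transpose_mul, Dm_transpose, Dmi_transpose]
  simp only [Matrix.mul_assoc]
  rw [← Matrix.mul_assoc (Dm m n) (Dm m n) (gc * Dmi m n), Dm_mul_Dm,
    ← Matrix.mul_assoc (Jmn m n) gc (Dmi m n),
    ← Matrix.mul_assoc gcᵀ (Jmn m n * gc) (Dmi m n),
    ← Matrix.mul_assoc gcᵀ (Jmn m n) gc, hrel, ← Dm_mul_Dm,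
    Matrix.mul_assoc (Dm m n) (Dm m n) (Dmi m n), Dm_mul_Dmi, Matrix.mul_one, Dmi_mul_Dm]

lemma hM_ortho (hrel : gcᵀ * Jmn m n * gc = Jmn m n) :
    (Dm m n * gc * Dmi m n) * (Dm m n * gc * Dmi m n)ᵀ = 1 :=
  mul_eq_one_comm.2 (hM_orthoT gc hrel)

lemma gc_decomp : gc = Dmi m n * (Dm m n * gc * Dmi m n) * Dm m n := by
  have h : Dmi m n * (Dm m n * gc * Dmi m n) * Dm m n
      = Dmi m n * (Dm m n * (gc * (Dmi m n * Dm m n))) := by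
    simp only [Matrix.mul_assoc]
  rw [h, Dmi_mul_Dm, Matrix.mul_one, cancel_DmiDm]

lemma gcinv_eq (hrel : gcᵀ * Jmn m n * gc = Jmn m n) :
    gc⁻¹ = Dmi m n * (Dm m n * gc * Dmi m n)ᵀ * Dm m n := by
  apply Matrix.inv_eq_right_inv
  set A := Dm m n * gc * Dmi m n with hA
  have ho : A * Aᵀ = 1 := hM_ortho gc hrel
  rw [gc_decomp gc, ← hA]
  simp only [Matrix.mul_assoc]
  rw [cancel_DmDmi (Aᵀ * Dm m n), ← Matrix.mul_assoc A Aᵀ (Dm m n), ho, Matrix.one_mul,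
    Dmi_mul_Dm]

lemma theta_expand (hrel : gcᵀ * Jmn m n * gc = Jmn m n) (k l : Fin (m+n)) :
    gc * ((Xbar k l : gC m n) : Matrix (Fin (m+n)) (Fin (m+n)) ℂ) * gc⁻¹
      = ∑ u : Fin (m+n), ∑ w : Fin (m+n),
          ((Dm m n * gc * Dmi m n) u k * (Dm m n * gc * Dmi m n) w l) •
            ((Xbar u w : gC m n) : Matrix (Fin (m+n)) (Fin (m+n)) ℂ) := by
  set A := Dm m n * gc * Dmi m n with hA
  have hsum : ∑ u : Fin (m+n), ∑ w : Fin (m+n), (A u k * A w l) •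
        ((Xbar u w : gC m n) : Matrix (Fin (m+n)) (Fin (m+n)) ℂ)
      = Dmi m n * (A * Ytil k l * Aᵀ) * Dm m n := by
    rw [conj_Ytil A k l]
    rw [Matrix.mul_sum, Matrix.sum_mul]
    refine Finset.sum_congr rfl (fun u _ => ?_)
    rw [Matrix.mul_sum, Matrix.sum_mul]
    refine Finset.sum_congr rfl (fun w _ => ?_)
    rw [Xbar_val, Matrix.mul_smul, Matrix.smul_mul]
  rw [hsum, Xbar_val, gcinv_eq gc hrel, ← hA]
  rw [gc_decomp gc, ← hA]
  simp only [Matrix.mul_assoc]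
  rw [cancel_DmDmi (Aᵀ * Dm m n), cancel_DmDmi (Ytil k l * (Aᵀ * Dm m n))]

end ConjFacts
end SOMN
namespace SOMN
set_option linter.unusedSectionVars false

section Theta
variable {m n p : ℕ}

def theta (gc : Matrix (Fin (m+n)) (Fin (m+n)) ℂ) (hrel : gcᵀ * Jmn m n * gc = Jmn m n)
    (X : gC m n) : gC m n :=
  ⟨gc * (X : Matrix (Fin (m+n)) (Fin (m+n)) ℂ) * gc⁻¹, conj_mem_gC gc hrel X⟩

lemma theta_neg (gc : Matrix (Fin (m+n)) (Fin (m+n)) ℂ)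
    (hrel : gcᵀ * Jmn m n * gc = Jmn m n) (X : gC m n) :
    theta gc hrel (-X) = - theta gc hrel X := by
  apply Subtype.ext
  show gc * ((-X : gC m n) : Matrix (Fin (m+n)) (Fin (m+n)) ℂ) * gc⁻¹
    = -(gc * (X : Matrix (Fin (m+n)) (Fin (m+n)) ℂ) * gc⁻¹)
  have h : ((-X : gC m n) : Matrix (Fin (m+n)) (Fin (m+n)) ℂ)
      = -(X : Matrix (Fin (m+n)) (Fin (m+n)) ℂ) := rfl
  rw [h, Matrix.mul_neg, Matrix.neg_mul]

lemma theta_bracket_zero (gc : Matrix (Fin (m+n)) (Fin (m+n)) ℂ)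
    (hrel : gcᵀ * Jmn m n * gc = Jmn m n) {x y : gC m n} (hxy : ⁅x, y⁆ = 0) :
    ⁅theta gc hrel x, theta gc hrel y⁆ = 0 := by
  apply Subtype.ext
  rw [LieSubalgebra.coe_bracket, Ring.lie_def]
  have h0 : (x : Matrix (Fin (m+n)) (Fin (m+n)) ℂ) * y - (y : Matrix (Fin (m+n)) (Fin (m+n)) ℂ) * x = 0 := by
    have h := congrArg (Subtype.val) hxy
    rw [LieSubalgebra.coe_bracket, Ring.lie_def] at h
    exact h
  have hc : ∀ a b : Matrix (Fin (m+n)) (Fin (m+n)) ℂ,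
      gc * a * gc⁻¹ * (gc * b * gc⁻¹) = gc * (a * b) * gc⁻¹ := by
    intro a b
    simp only [Matrix.mul_assoc]
    rw [← Matrix.mul_assoc gc⁻¹ gc (b * gc⁻¹), gc_inv_mul gc hrel, Matrix.one_mul]
  show gc * (x : Matrix (Fin (m+n)) (Fin (m+n)) ℂ) * gc⁻¹ *
      (gc * (y : Matrix (Fin (m+n)) (Fin (m+n)) ℂ) * gc⁻¹) -
      gc * (y : Matrix (Fin (m+n)) (Fin (m+n)) ℂ) * gc⁻¹ *
      (gc * (x : Matrix (Fin (m+n)) (Fin (m+n)) ℂ) * gc⁻¹) = _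
  rw [hc, hc, ← Matrix.sub_mul, ← Matrix.mul_sub, h0, Matrix.mul_zero, Matrix.zero_mul]
  rfl

lemma theta_Xbar_expand (gc : Matrix (Fin (m+n)) (Fin (m+n)) ℂ)
    (hrel : gcᵀ * Jmn m n * gc = Jmn m n) (k l : Fin (m+n)) :
    theta gc hrel (Xbar k l) = ∑ uw : Fin (m+n) × Fin (m+n),
      ((Dm m n * gc * Dmi m n) uw.1 k * (Dm m n * gc * Dmi m n) uw.2 l) • Xbar uw.1 uw.2 := by
  apply Subtype.ext
  have hcoe : ((∑ uw : Fin (m+n) × Fin (m+n),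
        ((Dm m n * gc * Dmi m n) uw.1 k * (Dm m n * gc * Dmi m n) uw.2 l) • Xbar uw.1 uw.2 :
        gC m n) : Matrix (Fin (m+n)) (Fin (m+n)) ℂ)
      = ∑ uw : Fin (m+n) × Fin (m+n),
          ((Dm m n * gc * Dmi m n) uw.1 k * (Dm m n * gc * Dmi m n) uw.2 l) •
            ((Xbar uw.1 uw.2 : gC m n) : Matrix (Fin (m+n)) (Fin (m+n)) ℂ) := by
    rw [AddSubmonoidClass.coe_finset_sum]
    rfl
  rw [hcoe]
  show gc * ((Xbar k l : gC m n) : Matrix (Fin (m+n)) (Fin (m+n)) ℂ) * gc⁻¹ = _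
  rw [theta_expand gc hrel k l]
  exact (Fintype.sum_prod_type' (fun u w =>
    ((Dm m n * gc * Dmi m n) u k * (Dm m n * gc * Dmi m n) w l) •
      ((Xbar u w : gC m n) : Matrix (Fin (m+n)) (Fin (m+n)) ℂ))).symm

lemma iota_theta_Xbar (gc : Matrix (Fin (m+n)) (Fin (m+n)) ℂ)
    (hrel : gcᵀ * Jmn m n * gc = Jmn m n) (k l : Fin (m+n)) :
    ι (theta gc hrel (Xbar k l)) = ∑ uw : Fin (m+n) × Fin (m+n),
      ((Dm m n * gc * Dmi m n) uw.1 k * (Dm m n * gc * Dmi m n) uw.2 l) • ι (Xbar uw.1 uw.2) := by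
  rw [theta_Xbar_expand gc hrel, iota_sum]
  exact Finset.sum_congr rfl fun uw _ => iota_smul _ _

lemma Phi_Lp (Φ : U m n →ₐ[ℂ] U m n) {q : ℕ} (v : Fin q → U m n) :
    Φ (Lp v) = Lp (fun a => Φ (v a)) := by
  rw [Lp, map_list_prod, List.map_ofFn]
  rfl

lemma Wb_eq (s : Finset (Fin (m+n))) (hs : s.card = 2*p) :
    Wb m n p s = ∑ τ : Equiv.Perm (Fin (2*p)),
      if Pplus (fun a => s.orderEmbOfFin hs a) τ then
        ((Equiv.Perm.sign τ : ℤ) : ℂ) • Lp (fun a =>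
          ι (Xbar (s.orderEmbOfFin hs (τ (pos0 a))) (s.orderEmbOfFin hs (τ (pos1 a)))))
      else 0 := by
  unfold Wb
  rw [dif_pos hs]
  refine Finset.sum_congr rfl fun τ _ => ?_
  split
  · rw [← Int.cast_smul_eq_zsmul ℂ]
    rfl
  · rfl

/-- pairing between `Fin p → α × α` and `Fin (2p) → α`. -/
def pairing {α : Type*} : (Fin p → α × α) ≃ (Fin (2*p) → α) where
  toFun φ s := if toB s then (φ (toP s)).2 else (φ (toP s)).1
  invFun χ a := (χ (pos0 a), χ (pos1 a))
  left_inv φ := by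
    funext a
    apply Prod.ext <;> simp [toB_pos0, toB_pos1, toP_pos0, toP_pos1]
  right_inv χ := by
    funext s
    rcases pos_cases s with h | h <;> rw [h] <;>
      simp [toB_pos0, toB_pos1, toP_pos0, toP_pos1]

def ePB : Fin p × Bool ≃ Fin (2*p) where
  toFun x := ofPB x.1 x.2
  invFun s := (toP s, toB s)
  left_inv x := by
    apply Prod.ext <;> simp [toP_ofPB, toB_ofPB]
  right_inv s := ofPB_toP s

lemma prod_split (G : Fin (2*p) → ℂ) : ∏ s, G s = ∏ a, G (pos0 a) * G (pos1 a) := by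
  rw [← Fintype.prod_equiv (ePB (p := p)) (fun x => G (ePB x)) G (fun x => rfl),
    Fintype.prod_prod_type]
  refine Finset.prod_congr rfl fun a _ => ?_
  rw [Fintype.prod_bool, mul_comm]
  rfl

lemma det_sum (f χ : Fin (2*p) → Fin (m+n)) (A : Matrix (Fin (m+n)) (Fin (m+n)) ℂ) :
    ∑ τ : Equiv.Perm (Fin (2*p)), ((Equiv.Perm.sign τ : ℤ) : ℂ) * ∏ s, A (χ s) (f (τ s))
      = (Matrix.of fun s t => A (χ t) (f s)).det := by
  rw [Matrix.det_apply]
  refine Finset.sum_congr rfl fun τ _ => ?_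
  rw [Units.smul_def, zsmul_eq_mul]
  rfl

end Theta
end SOMN
namespace SOMN
set_option linter.unusedSectionVars false

section PermOf
variable {N q : ℕ}

def permOf (χ : Fin q → Fin N) (hinj : Function.Injective χ)
    (h : (Finset.image χ Finset.univ).card = q) : Equiv.Perm (Fin q) :=
  Equiv.ofBijective
    (fun s => (Finset.orderIsoOfFin _ h).symm
      ⟨χ s, Finset.mem_image_of_mem χ (Finset.mem_univ s)⟩)
    ((Finite.injective_iff_bijective).1 (fun s t hst => by
      apply hinj
      have h2 := congrArg (fun z => ((Finset.orderIsoOfFin _ h) z : Fin N)) hst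
      simpa using h2))

lemma permOf_spec (χ : Fin q → Fin N) (hinj : Function.Injective χ)
    (h : (Finset.image χ Finset.univ).card = q) (s : Fin q) :
    (Finset.image χ Finset.univ).orderEmbOfFin h (permOf χ hinj h s) = χ s := by
  show ((Finset.image χ Finset.univ).orderEmbOfFin h)
    ((Finset.orderIsoOfFin _ h).symm ⟨χ s, _⟩) = χ s
  rw [← Finset.coe_orderIsoOfFin_apply, OrderIso.apply_symm_apply]

lemma image_emb_perm (s' : Finset (Fin N)) (hs' : s'.card = q) (τ' : Equiv.Perm (Fin q)) :
    Finset.image (fun s => s'.orderEmbOfFin hs' (τ' s)) Finset.univ = s' := by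
  apply Finset.ext
  intro b
  simp only [Finset.mem_image, Finset.mem_univ, true_and]
  constructor
  · rintro ⟨a, rfl⟩
    exact Finset.orderEmbOfFin_mem s' hs' (τ' a)
  · intro hb
    have hmem : b ∈ Set.range (s'.orderEmbOfFin hs') := by
      rw [Finset.range_orderEmbOfFin]
      exact hb
    obtain ⟨a, ha⟩ := hmem
    exact ⟨τ'⁻¹ a, by rw [perm_apply_inv_self, ha]⟩

lemma emb_perm_injective (s' : Finset (Fin N)) (hs' : s'.card = q) (τ' : Equiv.Perm (Fin q)) :
    Function.Injective (fun s => s'.orderEmbOfFin hs' (τ' s)) :=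
  fun a b hab => τ'.injective ((s'.orderEmbOfFin hs').injective hab)

lemma permOf_eq (s' : Finset (Fin N)) (hs' : s'.card = q) (τ' : Equiv.Perm (Fin q))
    (hinj : Function.Injective (fun s => s'.orderEmbOfFin hs' (τ' s)))
    (himg : (Finset.image (fun s => s'.orderEmbOfFin hs' (τ' s)) Finset.univ).card = q) :
    permOf _ hinj himg = τ' := by
  apply Equiv.ext
  intro s
  have h1 := permOf_spec (fun s => s'.orderEmbOfFin hs' (τ' s)) hinj himg s
  have hfun : (fun x => s'.orderEmbOfFin hs' x)
      = fun x => (Finset.image (fun s => s'.orderEmbOfFin hs' (τ' s))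
          Finset.univ).orderEmbOfFin himg x := by
    apply Finset.orderEmbOfFin_unique
    · intro x
      rw [image_emb_perm s' hs' τ']
      exact Finset.orderEmbOfFin_mem s' hs' x
    · exact (s'.orderEmbOfFin hs').strictMono
  apply ((Finset.image (fun s => s'.orderEmbOfFin hs' (τ' s))
      Finset.univ).orderEmbOfFin himg).injective
  rw [h1]
  exact congrFun hfun (τ' s)

end PermOf
end SOMN
namespace SOMN
set_option linter.unusedSectionVars false

section MasterSec
variable {m n p : ℕ}

lemma master (gc : Matrix (Fin (m+n)) (Fin (m+n)) ℂ) (hrel : gcᵀ * Jmn m n * gc = Jmn m n)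
    (Φ : U m n →ₐ[ℂ] U m n)
    (hΦ : ∀ X : gC m n, Φ (ι X) = ι (theta gc hrel X))
    (I : Finset (Fin (m+n))) (hI : I.card = 2*p) :
    Φ (Wb m n p I) =
      ∑ s' ∈ Finset.univ.filter (fun s' : Finset (Fin (m+n)) => s'.card = 2*p),
        (if h' : s'.card = 2*p then
          (Matrix.of fun s t => (Dm m n * gc * Dmi m n)
            (s'.orderEmbOfFin h' t) (I.orderEmbOfFin hI s)).det
        else 0) • Wb m n p s' := by
  classical
  set A := Dm m n * gc * Dmi m n with hA
  have hantiX : ∀ i j : Fin (m+n), ι (Xbar j i : gC m n) = - ι (Xbar i j) := fun i j => by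
    rw [Xbar_anti, iota_neg]
  have hcommX : ∀ i j k l : Fin (m+n), i ≠ k → i ≠ l → j ≠ k → j ≠ l →
      Commute (ι (Xbar i j : gC m n)) (ι (Xbar k l)) := fun i j k l h1 h2 h3 h4 =>
    commute_iota (Xbar_bracket_zero i j k l h1 h2 h3 h4)
  have hantiT : ∀ i j : Fin (m+n),
      ι (theta gc hrel (Xbar j i)) = - ι (theta gc hrel (Xbar i j)) := fun i j => by
    rw [Xbar_anti, theta_neg, iota_neg]
  have hcommT : ∀ i j k l : Fin (m+n), i ≠ k → i ≠ l → j ≠ k → j ≠ l →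
      Commute (ι (theta gc hrel (Xbar i j))) (ι (theta gc hrel (Xbar k l))) :=
    fun i j k l h1 h2 h3 h4 =>
      commute_iota (theta_bracket_zero gc hrel (Xbar_bracket_zero i j k l h1 h2 h3 h4))
  have hc0 : ((2^p * p.factorial : ℕ) : ℂ) ≠ 0 := Nat.cast_ne_zero.2 (by positivity)
  have hB : Φ (Wb m n p I) = ∑ τ : Equiv.Perm (Fin (2*p)),
      if Pplus (fun a => I.orderEmbOfFin hI a) τ then
        ((Equiv.Perm.sign τ : ℤ) : ℂ) • Lp (fun a => ι (theta gc hrel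
          (Xbar (I.orderEmbOfFin hI (τ (pos0 a))) (I.orderEmbOfFin hI (τ (pos1 a))))))
      else 0 := by
    rw [Wb_eq I hI, map_sum]
    refine Finset.sum_congr rfl fun τ _ => ?_
    rw [apply_ite Φ, map_zero]
    split
    · rw [map_smul, Phi_Lp]
      congr 1
      exact congrArg Lp (funext fun a => hΦ _)
    · rfl
  have hExp : ∀ τ : Equiv.Perm (Fin (2*p)),
      Lp (fun a => ι (theta gc hrel
          (Xbar (I.orderEmbOfFin hI (τ (pos0 a))) (I.orderEmbOfFin hI (τ (pos1 a))))))
      = ∑ χ : Fin (2*p) → Fin (m+n),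
          (∏ s, A (χ s) (I.orderEmbOfFin hI (τ s))) •
            Lp (fun a => ι (Xbar (χ (pos0 a)) (χ (pos1 a)))) := by
    intro τ
    have h1 : (fun a : Fin p => ι (theta gc hrel
          (Xbar (I.orderEmbOfFin hI (τ (pos0 a))) (I.orderEmbOfFin hI (τ (pos1 a))))))
        = fun a => ∑ uw : Fin (m+n) × Fin (m+n),
            (A uw.1 (I.orderEmbOfFin hI (τ (pos0 a))) *
              A uw.2 (I.orderEmbOfFin hI (τ (pos1 a)))) • ι (Xbar uw.1 uw.2) := by
      funext a
      rw [iota_theta_Xbar gc hrel, ← hA]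
    rw [h1, Lp_sum, ← Equiv.sum_comp (pairing (p := p) (α := Fin (m+n))).symm]
    refine Finset.sum_congr rfl fun χ _ => ?_
    calc Lp (fun a => (A (χ (pos0 a)) (I.orderEmbOfFin hI (τ (pos0 a))) *
            A (χ (pos1 a)) (I.orderEmbOfFin hI (τ (pos1 a)))) •
            ι (Xbar (χ (pos0 a)) (χ (pos1 a))))
        = (∏ a, A (χ (pos0 a)) (I.orderEmbOfFin hI (τ (pos0 a))) *
            A (χ (pos1 a)) (I.orderEmbOfFin hI (τ (pos1 a)))) •
            Lp (fun a => ι (Xbar (χ (pos0 a)) (χ (pos1 a)))) := Lp_smul _ _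
      _ = (∏ s, A (χ s) (I.orderEmbOfFin hI (τ s))) •
            Lp (fun a => ι (Xbar (χ (pos0 a)) (χ (pos1 a)))) := by
          rw [← prod_split (fun s => A (χ s) (I.orderEmbOfFin hI (τ s)))]
  have hSF : ∑ τ : Equiv.Perm (Fin (2*p)), ((Equiv.Perm.sign τ : ℤ) : ℂ) •
        Lp (fun a => ι (theta gc hrel
          (Xbar (I.orderEmbOfFin hI (τ (pos0 a))) (I.orderEmbOfFin hI (τ (pos1 a))))))
      = ∑ χ : Fin (2*p) → Fin (m+n),
          (Matrix.of fun s t => A (χ t) (I.orderEmbOfFin hI s)).det •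
            Lp (fun a => ι (Xbar (χ (pos0 a)) (χ (pos1 a)))) := by
    calc ∑ τ : Equiv.Perm (Fin (2*p)), ((Equiv.Perm.sign τ : ℤ) : ℂ) •
          Lp (fun a => ι (theta gc hrel
            (Xbar (I.orderEmbOfFin hI (τ (pos0 a))) (I.orderEmbOfFin hI (τ (pos1 a))))))
        = ∑ τ : Equiv.Perm (Fin (2*p)), ∑ χ : Fin (2*p) → Fin (m+n),
            (((Equiv.Perm.sign τ : ℤ) : ℂ) * ∏ s, A (χ s) (I.orderEmbOfFin hI (τ s))) •
              Lp (fun a => ι (Xbar (χ (pos0 a)) (χ (pos1 a)))) := by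
          refine Finset.sum_congr rfl fun τ _ => ?_
          rw [hExp τ, Finset.smul_sum]
          refine Finset.sum_congr rfl fun χ _ => ?_
          rw [smul_smul]
      _ = ∑ χ : Fin (2*p) → Fin (m+n), ∑ τ : Equiv.Perm (Fin (2*p)),
            (((Equiv.Perm.sign τ : ℤ) : ℂ) * ∏ s, A (χ s) (I.orderEmbOfFin hI (τ s))) •
              Lp (fun a => ι (Xbar (χ (pos0 a)) (χ (pos1 a)))) := Finset.sum_comm
      _ = ∑ χ : Fin (2*p) → Fin (m+n),
            (Matrix.of fun s t => A (χ t) (I.orderEmbOfFin hI s)).det •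
              Lp (fun a => ι (Xbar (χ (pos0 a)) (χ (pos1 a)))) := by
          refine Finset.sum_congr rfl fun χ _ => ?_
          rw [← Finset.sum_smul, det_sum (fun a => I.orderEmbOfFin hI a) χ A]
  have hzero : ∑ χ ∈ Finset.univ.filter (fun χ : Fin (2*p) → Fin (m+n) =>
        ¬ Function.Injective χ),
      (Matrix.of fun s t => A (χ t) (I.orderEmbOfFin hI s)).det •
        Lp (fun a => ι (Xbar (χ (pos0 a)) (χ (pos1 a)))) = 0 := by
    refine Finset.sum_eq_zero fun χ hχ => ?_
    rw [Finset.mem_filter] at hχ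
    obtain ⟨a, b, hab, hne⟩ := Function.not_injective_iff.1 hχ.2
    rw [Matrix.det_zero_of_column_eq hne (fun k => by
      show A (χ a) (I.orderEmbOfFin hI k) = A (χ b) (I.orderEmbOfFin hI k)
      rw [hab]), zero_smul]
  have hreindex : ∑ χ ∈ Finset.univ.filter (fun χ : Fin (2*p) → Fin (m+n) =>
        Function.Injective χ),
      (Matrix.of fun s t => A (χ t) (I.orderEmbOfFin hI s)).det •
        Lp (fun a => ι (Xbar (χ (pos0 a)) (χ (pos1 a))))
      = ∑ x : {s' : Finset (Fin (m+n)) // s'.card = 2*p} × Equiv.Perm (Fin (2*p)),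
          (Matrix.of fun s t => A (x.1.1.orderEmbOfFin x.1.2 (x.2 t))
            (I.orderEmbOfFin hI s)).det •
            Lp (fun a => ι (Xbar (x.1.1.orderEmbOfFin x.1.2 (x.2 (pos0 a)))
              (x.1.1.orderEmbOfFin x.1.2 (x.2 (pos1 a))))) := by
    refine Finset.sum_bij'
      (i := fun χ hχ => (⟨Finset.image χ Finset.univ, by
        rw [Finset.card_image_of_injective _ (Finset.mem_filter.1 hχ).2, Finset.card_univ,
          Fintype.card_fin]⟩, permOf χ (Finset.mem_filter.1 hχ).2 (by
        rw [Finset.card_image_of_injective _ (Finset.mem_filter.1 hχ).2, Finset.card_univ,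
          Fintype.card_fin])))
      (j := fun x _ => fun s => x.1.1.orderEmbOfFin x.1.2 (x.2 s))
      (fun _ _ => Finset.mem_univ _)
      (fun x _ => Finset.mem_filter.2 ⟨Finset.mem_univ _, emb_perm_injective _ _ _⟩)
      (fun χ hχ => funext fun s => permOf_spec χ (Finset.mem_filter.1 hχ).2 (by
        rw [Finset.card_image_of_injective _ (Finset.mem_filter.1 hχ).2, Finset.card_univ,
          Fintype.card_fin]) s)
      (fun x hx => ?_) (fun χ hχ => ?_)
    · apply Prod.ext
      · exact Subtype.ext (image_emb_perm x.1.1 x.1.2 x.2)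
      · exact permOf_eq x.1.1 x.1.2 x.2 (emb_perm_injective _ _ _) (by
          rw [Finset.card_image_of_injective _ (emb_perm_injective x.1.1 x.1.2 x.2),
            Finset.card_univ, Fintype.card_fin])
    · have h1 := fun s => permOf_spec χ (Finset.mem_filter.1 hχ).2 (by
        rw [Finset.card_image_of_injective _ (Finset.mem_filter.1 hχ).2, Finset.card_univ,
          Fintype.card_fin] : (Finset.image χ Finset.univ).card = 2*p) s
      simp only [h1]
  have hinner : ∀ s' : {s' : Finset (Fin (m+n)) // s'.card = 2*p},
      ∑ τ' : Equiv.Perm (Fin (2*p)),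
        (Matrix.of fun s t => A (s'.1.orderEmbOfFin s'.2 (τ' t)) (I.orderEmbOfFin hI s)).det •
          Lp (fun a => ι (Xbar (s'.1.orderEmbOfFin s'.2 (τ' (pos0 a)))
            (s'.1.orderEmbOfFin s'.2 (τ' (pos1 a)))))
      = (Matrix.of fun s t => A (s'.1.orderEmbOfFin s'.2 t) (I.orderEmbOfFin hI s)).det •
          (((2^p * p.factorial : ℕ) : ℂ) • Wb m n p s'.1) := by
    intro s'
    calc ∑ τ' : Equiv.Perm (Fin (2*p)),
          (Matrix.of fun s t => A (s'.1.orderEmbOfFin s'.2 (τ' t)) (I.orderEmbOfFin hI s)).det •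
            Lp (fun a => ι (Xbar (s'.1.orderEmbOfFin s'.2 (τ' (pos0 a)))
              (s'.1.orderEmbOfFin s'.2 (τ' (pos1 a)))))
        = ∑ τ' : Equiv.Perm (Fin (2*p)),
            (Matrix.of fun s t => A (s'.1.orderEmbOfFin s'.2 t) (I.orderEmbOfFin hI s)).det •
            (((Equiv.Perm.sign τ' : ℤ) : ℂ) •
              Lp (fun a => ι (Xbar (s'.1.orderEmbOfFin s'.2 (τ' (pos0 a)))
                (s'.1.orderEmbOfFin s'.2 (τ' (pos1 a)))))) := by
          refine Finset.sum_congr rfl fun τ' _ => ?_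
          rw [show (Matrix.of fun s t => A (s'.1.orderEmbOfFin s'.2 (τ' t))
                (I.orderEmbOfFin hI s))
              = (Matrix.of fun s t => A (s'.1.orderEmbOfFin s'.2 t)
                (I.orderEmbOfFin hI s)).submatrix id ⇑τ' from rfl,
            Matrix.det_permute', mul_smul, smul_comm]
      _ = (Matrix.of fun s t => A (s'.1.orderEmbOfFin s'.2 t) (I.orderEmbOfFin hI s)).det •
            ∑ τ' : Equiv.Perm (Fin (2*p)), ((Equiv.Perm.sign τ' : ℤ) : ℂ) •
              Lp (fun a => ι (Xbar (s'.1.orderEmbOfFin s'.2 (τ' (pos0 a)))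
                (s'.1.orderEmbOfFin s'.2 (τ' (pos1 a))))) := by
          rw [Finset.smul_sum]
      _ = (Matrix.of fun s t => A (s'.1.orderEmbOfFin s'.2 t) (I.orderEmbOfFin hI s)).det •
            (((2^p * p.factorial : ℕ) : ℂ) • ∑ τ' : Equiv.Perm (Fin (2*p)),
              if Pplus (fun a => s'.1.orderEmbOfFin s'.2 a) τ' then
                ((Equiv.Perm.sign τ' : ℤ) : ℂ) •
                  Lp (fun a => ι (Xbar (s'.1.orderEmbOfFin s'.2 (τ' (pos0 a)))
                    (s'.1.orderEmbOfFin s'.2 (τ' (pos1 a)))))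
              else 0) := by
          congr 1
          exact CL (fun a => s'.1.orderEmbOfFin s'.2 a) (s'.1.orderEmbOfFin s'.2).strictMono
            (fun i j => ι (Xbar i j)) hantiX hcommX
      _ = (Matrix.of fun s t => A (s'.1.orderEmbOfFin s'.2 t) (I.orderEmbOfFin hI s)).det •
            (((2^p * p.factorial : ℕ) : ℂ) • Wb m n p s'.1) := by
          rw [← Wb_eq s'.1 s'.2]
  have hsub : ∑ s' ∈ Finset.univ.filter (fun s' : Finset (Fin (m+n)) => s'.card = 2*p),
      (if h' : s'.card = 2*p then
        (Matrix.of fun s t => A (s'.orderEmbOfFin h' t) (I.orderEmbOfFin hI s)).det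
       else 0) • Wb m n p s'
      = ∑ s' : {s' : Finset (Fin (m+n)) // s'.card = 2*p},
          (Matrix.of fun s t => A (s'.1.orderEmbOfFin s'.2 t) (I.orderEmbOfFin hI s)).det •
            Wb m n p s'.1 := by
    rw [Finset.sum_subtype (p := fun s' : Finset (Fin (m+n)) => s'.card = 2*p) _
      (fun x => by rw [Finset.mem_filter]; simp)
      (fun s' => (if h' : s'.card = 2*p then
        (Matrix.of fun s t => A (s'.orderEmbOfFin h' t) (I.orderEmbOfFin hI s)).det
       else 0) • Wb m n p s')]
    refine Finset.sum_congr rfl fun s' _ => ?_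
    rw [dif_pos s'.2]
  have hmain : ((2^p * p.factorial : ℕ) : ℂ) • Φ (Wb m n p I)
      = ((2^p * p.factorial : ℕ) : ℂ) •
        ∑ s' ∈ Finset.univ.filter (fun s' : Finset (Fin (m+n)) => s'.card = 2*p),
          (if h' : s'.card = 2*p then
            (Matrix.of fun s t => A (s'.orderEmbOfFin h' t) (I.orderEmbOfFin hI s)).det
          else 0) • Wb m n p s' := by
    calc ((2^p * p.factorial : ℕ) : ℂ) • Φ (Wb m n p I)
        = ((2^p * p.factorial : ℕ) : ℂ) • ∑ τ : Equiv.Perm (Fin (2*p)),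
            if Pplus (fun a => I.orderEmbOfFin hI a) τ then
              ((Equiv.Perm.sign τ : ℤ) : ℂ) • Lp (fun a => ι (theta gc hrel
                (Xbar (I.orderEmbOfFin hI (τ (pos0 a))) (I.orderEmbOfFin hI (τ (pos1 a))))))
            else 0 := by rw [hB]
      _ = ∑ τ : Equiv.Perm (Fin (2*p)), ((Equiv.Perm.sign τ : ℤ) : ℂ) •
            Lp (fun a => ι (theta gc hrel
              (Xbar (I.orderEmbOfFin hI (τ (pos0 a))) (I.orderEmbOfFin hI (τ (pos1 a)))))) :=
          (CL (fun a => I.orderEmbOfFin hI a) (I.orderEmbOfFin hI).strictMono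
            (fun i j => ι (theta gc hrel (Xbar i j))) hantiT hcommT).symm
      _ = ∑ χ : Fin (2*p) → Fin (m+n),
            (Matrix.of fun s t => A (χ t) (I.orderEmbOfFin hI s)).det •
              Lp (fun a => ι (Xbar (χ (pos0 a)) (χ (pos1 a)))) := hSF
      _ = ∑ χ ∈ Finset.univ.filter (fun χ : Fin (2*p) → Fin (m+n) => Function.Injective χ),
            (Matrix.of fun s t => A (χ t) (I.orderEmbOfFin hI s)).det •
              Lp (fun a => ι (Xbar (χ (pos0 a)) (χ (pos1 a)))) := by
          rw [← Finset.sum_filter_add_sum_filter_not Finset.univ Function.Injective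
            (fun χ => (Matrix.of fun s t => A (χ t) (I.orderEmbOfFin hI s)).det •
              Lp (fun a => ι (Xbar (χ (pos0 a)) (χ (pos1 a))))), hzero, add_zero]
      _ = ∑ x : {s' : Finset (Fin (m+n)) // s'.card = 2*p} × Equiv.Perm (Fin (2*p)),
            (Matrix.of fun s t => A (x.1.1.orderEmbOfFin x.1.2 (x.2 t))
              (I.orderEmbOfFin hI s)).det •
              Lp (fun a => ι (Xbar (x.1.1.orderEmbOfFin x.1.2 (x.2 (pos0 a)))
                (x.1.1.orderEmbOfFin x.1.2 (x.2 (pos1 a))))) := hreindex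
      _ = ∑ s' : {s' : Finset (Fin (m+n)) // s'.card = 2*p},
            ∑ τ' : Equiv.Perm (Fin (2*p)),
              (Matrix.of fun s t => A (s'.1.orderEmbOfFin s'.2 (τ' t))
                (I.orderEmbOfFin hI s)).det •
                Lp (fun a => ι (Xbar (s'.1.orderEmbOfFin s'.2 (τ' (pos0 a)))
                  (s'.1.orderEmbOfFin s'.2 (τ' (pos1 a))))) := Fintype.sum_prod_type _
      _ = ∑ s' : {s' : Finset (Fin (m+n)) // s'.card = 2*p},
            (Matrix.of fun s t => A (s'.1.orderEmbOfFin s'.2 t) (I.orderEmbOfFin hI s)).det •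
              (((2^p * p.factorial : ℕ) : ℂ) • Wb m n p s'.1) :=
          Finset.sum_congr rfl fun s' _ => hinner s'
      _ = ((2^p * p.factorial : ℕ) : ℂ) •
            ∑ s' : {s' : Finset (Fin (m+n)) // s'.card = 2*p},
              (Matrix.of fun s t => A (s'.1.orderEmbOfFin s'.2 t)
                (I.orderEmbOfFin hI s)).det • Wb m n p s'.1 := by
          rw [Finset.smul_sum]
          exact Finset.sum_congr rfl fun s' _ => smul_comm _ _ _
      _ = ((2^p * p.factorial : ℕ) : ℂ) •
            ∑ s' ∈ Finset.univ.filter (fun s' : Finset (Fin (m+n)) => s'.card = 2*p),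
              (if h' : s'.card = 2*p then
                (Matrix.of fun s t => A (s'.orderEmbOfFin h' t)
                  (I.orderEmbOfFin hI s)).det
              else 0) • Wb m n p s' := by rw [hsub]
  exact smul_right_injective (U m n) hc0 hmain

end MasterSec
end SOMN

open SOMN in
/-- Ad-invariance of the span of Pfaffian-type elements for SO₀(m,n)
(Proposition 2-6(1)).  The identity component is formalized as the connected
component of the identity inside the real matrix group
`{g | gᵀ I_{m,n} g = I_{m,n}, det g = 1}`, and `Ad(g)` as any algebra
homomorphism of `U(𝔤_ℂ)` extending the conjugation `X ↦ g X g⁻¹` on `𝔤_ℂ`. -/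
theorem ad_invariance_pfaffian_span
    (m n p : ℕ) (hn : 1 ≤ n) (hnm : n ≤ m) (hp : 1 ≤ p) (h2p : 2*p ≤ m + n)
    (g : Matrix (Fin (m+n)) (Fin (m+n)) ℝ)
    (hg : g ∈ connectedComponentIn
      {h : Matrix (Fin (m+n)) (Fin (m+n)) ℝ |
        hᵀ * (Matrix.diagonal fun i : Fin (m+n) => if (i : ℕ) < m then (1 : ℝ) else -1) * h =
          (Matrix.diagonal fun i : Fin (m+n) => if (i : ℕ) < m then (1 : ℝ) else -1) ∧
        h.det = 1} 1) :
    (∀ X : gC m n,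
        (g.map fun x => (x : ℂ)) * (X : Matrix (Fin (m+n)) (Fin (m+n)) ℂ) *
          (g.map fun x => (x : ℂ))⁻¹ ∈ gC m n) ∧
    ∀ (Φ : U m n →ₐ[ℂ] U m n),
      (∀ X : gC m n, ∃ Y : gC m n,
        (Y : Matrix (Fin (m+n)) (Fin (m+n)) ℂ) =
          (g.map fun x => (x : ℂ)) * (X : Matrix (Fin (m+n)) (Fin (m+n)) ℂ) *
            (g.map fun x => (x : ℂ))⁻¹ ∧
        Φ (ι X) = ι Y) →
      ∀ I : Finset (Fin (m+n)), I.card = 2*p →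
        (∃ a : Finset (Fin (m+n)) → ℂ,
          Φ (Wb m n p I) =
            ∑ I' ∈ Finset.univ.filter (fun I' : Finset (Fin (m+n)) => I'.card = 2*p),
              a I' • Wb m n p I') ∧
        Φ (Wb m n p I) ∈ Submodule.span ℂ
          ((fun I' : Finset (Fin (m+n)) => Wb m n p I') '' {I' | I'.card = 2*p}) := by
  classical
  have hgS := connectedComponentIn_subset _ _ hg
  obtain ⟨hgrel, hgdet⟩ := hgS
  set gc := g.map (fun x : ℝ => (x : ℂ)) with hgc
  have hJ : (Matrix.diagonal fun i : Fin (m+n) => if (i : ℕ) < m then (1:ℝ) else -1).map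
      (⇑Complex.ofRealHom) = Jmn m n := by
    rw [Matrix.diagonal_map (by norm_num), Jmn]
    have hfun : (fun i : Fin (m+n) => Complex.ofRealHom (if (i:ℕ) < m then (1:ℝ) else -1))
        = fun i : Fin (m+n) => if (i:ℕ) < m then (1:ℂ) else -1 := by
      funext i
      by_cases h : (i:ℕ) < m
      · rw [if_pos h, if_pos h]
        norm_num
      · rw [if_neg h, if_neg h]
        norm_num
    rw [hfun]
  have hrel : gcᵀ * Jmn m n * gc = Jmn m n := by
    have h2 : Complex.ofRealHom.mapMatrix
          (gᵀ * (Matrix.diagonal fun i : Fin (m+n) => if (i : ℕ) < m then (1:ℝ) else -1) * g)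
        = Complex.ofRealHom.mapMatrix
          (Matrix.diagonal fun i : Fin (m+n) => if (i : ℕ) < m then (1:ℝ) else -1) :=
      congrArg _ hgrel
    rw [map_mul, map_mul] at h2
    simp only [RingHom.mapMatrix_apply] at h2
    rw [Matrix.transpose_map, hJ] at h2
    have hgcoe : g.map (⇑Complex.ofRealHom) = gc := rfl
    rw [hgcoe] at h2
    exact h2
  refine ⟨fun X => conj_mem_gC gc hrel X, ?_⟩
  intro Φ hΦ' I hI
  have hΦ : ∀ X : gC m n, Φ (ι X) = ι (theta gc hrel X) := by
    intro X
    obtain ⟨Y, hY1, hY2⟩ := hΦ' X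
    rw [hY2]
    congr 1
    exact Subtype.ext (by rw [hY1]; rfl)
  have hMaster := master gc hrel Φ hΦ I hI
  constructor
  · exact ⟨fun s' => if h' : s'.card = 2*p then
      (Matrix.of fun s t => (Dm m n * gc * Dmi m n)
        (s'.orderEmbOfFin h' t) (I.orderEmbOfFin hI s)).det else 0, hMaster⟩
  · rw [hMaster]
    apply Submodule.sum_mem
    intro s' hs'
    apply Submodule.smul_mem
    apply Submodule.subset_span
    exact ⟨s', by rw [Finset.mem_filter] at hs'; exact hs'.2, rfl⟩
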